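/- arXiv:1706.06452 — 3 statements merged into one kernel-verified Lean document; each statement's English description precedes it below -/
import Mathlib

section
/- Let α ∈ R^+∖R_P^+ be a P-cosmall root. Then (α, γ) = 0 for every γ ∈ R_P^+∖I(s_α). -/
/-!
Common setup: a finite crystallographic root system `R` spanning a Euclidean space `E`,
with a base of simple roots, positive roots, Weyl group, Bruhat order, Hecke (Demazure)
product, degrees, greedy decompositions, extended supports, minimal degrees and
generalized cascades of orthogonal roots, following the conventions of the paper.
-/

open scoped RealInnerProductSpace BigOperators

attribute [local instance] Classical.propDecidable

noncomputable section

variable {E : Type} [NormedAddCommGroup E] [InnerProductSpace ℝ E] [FiniteDimensional ℝ E]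

/-- The reflection `s_α` along a root `α` (the orthogonal reflection fixing the
hyperplane orthogonal to `α`). -/
def sRefl (α : E) : E ≃ₗᵢ[ℝ] E := Submodule.reflection (Submodule.span ℝ {α})ᗮ

/-- The coroot `α^∨ = 2α/(α,α)`. -/
def coroot (α : E) : E := (2 / ⟪α, α⟫) • α

/-- `x` is a nonnegative integral combination of elements of `Δ`. -/
def nonnegComb (Δ : Finset E) (x : E) : Prop :=
  ∃ c : E → ℕ, x = ∑ β ∈ Δ, (c β : ℝ) • β

/-- `x` lies in the `ℤ`-span of `T`. -/
def inZSpan (T : Finset E) (x : E) : Prop :=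
  ∃ c : E → ℤ, x = ∑ β ∈ T, (c β : ℝ) • β

/-- A finite crystallographic (reduced) root system spanning `E`, together with a base:
`R` is the set of roots, `simples` the set of simple roots, `pos` the set of positive
roots. -/
structure RootSystemData (E : Type) [NormedAddCommGroup E] [InnerProductSpace ℝ E]
    [FiniteDimensional ℝ E] where
  R : Finset E
  simples : Finset E
  pos : Finset E
  zero_not_mem : (0 : E) ∉ R
  span_top : Submodule.span ℝ (R : Set E) = ⊤
  neg_mem : ∀ α ∈ R, -α ∈ R
  reduced : ∀ α ∈ R, ∀ t : ℝ, t • α ∈ R → t = 1 ∨ t = -1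
  crystallographic : ∀ α ∈ R, ∀ β ∈ R, ∃ n : ℤ, ⟪β, coroot α⟫ = (n : ℝ)
  refl_mem : ∀ α ∈ R, ∀ β ∈ R, sRefl α β ∈ R
  simples_subset : simples ⊆ pos
  pos_subset : pos ⊆ R
  lin_indep : LinearIndependent ℝ (fun β : simples => (β : E))
  pos_iff : ∀ α ∈ R, (α ∈ pos ↔ nonnegComb simples α)
  pos_or_neg : ∀ α ∈ R, α ∈ pos ∨ -α ∈ pos
  coroot_comb : ∀ α ∈ pos, ∃ c : E → ℕ, coroot α = ∑ β ∈ simples, (c β : ℝ) • coroot β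

variable (S : RootSystemData E)

/-- The partial order on roots: `α ≤ α'` iff `α' - α` is a nonnegative combination of
simple roots. -/
def rootLE (α α' : E) : Prop := nonnegComb S.simples (α' - α)

/-- The partial order on coroots: `corootLE S α α'` means `α^∨ ≤ α'^∨` in `ℤΔ^∨`. -/
def corootLE (α α' : E) : Prop :=
  ∃ c : E → ℕ, coroot α' - coroot α = ∑ β ∈ S.simples, (c β : ℝ) • coroot β

/-- The support `Δ(α)` of a root: the set of simple roots `β` with `β ≤ α`. -/
def suppR (α : E) : Finset E := S.simples.filter fun β => rootLE S β α

/-- The root subsystem `R(α)` of `R` generated by the support `Δ(α)`. -/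
def subsysOf (α : E) : Finset E := S.R.filter fun μ => inZSpan (suppR S α) μ

/-- A positive root `φ` is locally high if it is the highest root of `R(φ)`. -/
def IsLocallyHigh (φ : E) : Prop :=
  φ ∈ S.pos ∧ ∀ μ ∈ subsysOf S φ, rootLE S μ φ

/-- Two roots are strongly orthogonal if neither their sum nor their difference lies
in `R ∪ {0}`. -/
def StronglyOrthogonal (α α' : E) : Prop :=
  α + α' ∉ S.R ∧ α - α' ∉ S.R ∧ α + α' ≠ 0 ∧ α - α' ≠ 0

/-- Two sets of roots are totally disjoint if each element of one is strongly
orthogonal to each element of the other. -/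
def TotallyDisjoint (A B : Finset E) : Prop :=
  ∀ a ∈ A, ∀ b ∈ B, StronglyOrthogonal S a b

/-- Adjacency in the Dynkin diagram: distinct and not orthogonal. -/
def DynkinAdj (β β' : E) : Prop := β ≠ β' ∧ ⟪β, β'⟫ ≠ 0

/-- A set of simple roots is connected (as a subset of the Dynkin diagram). -/
def DynkinConnected (C : Finset E) : Prop :=
  ∀ β ∈ C, ∀ β' ∈ C,
    Relation.ReflTransGen (fun x y => x ∈ C ∧ y ∈ C ∧ DynkinAdj x y) β β'

/-- `C` is a connected component of `A` (as subsets of the Dynkin diagram): a maximal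
connected subset of `A`. -/
def IsConnComponent (A C : Finset E) : Prop :=
  C.Nonempty ∧ C ⊆ A ∧ DynkinConnected C ∧
    ∀ C', C ⊆ C' → C' ⊆ A → DynkinConnected C' → C' = C

/-- `R_P^+`, the set of positive roots lying in `ℤΔ_P`. -/
def posP (ΔP : Finset E) : Finset E := S.pos.filter fun γ => inZSpan ΔP γ

/-- The (nonnegative integral) coefficients of the coroot `α^∨` in the basis of simple
coroots. -/
def corootCoeffs (α : E) : E → ℕ :=
  if h : ∃ c : E → ℕ, (∀ β, β ∉ S.simples → c β = 0) ∧
      coroot α = ∑ β ∈ S.simples, (c β : ℝ) • coroot β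
  then h.choose else fun _ => 0

/-- The degree `d(α) = α^∨ + ℤΔ_P^∨`, recorded as the coefficient function on
`Δ ∖ Δ_P` (a degree is an element of `ℤΔ^∨/ℤΔ_P^∨` with nonnegative coefficients,
i.e. a function `Δ ∖ Δ_P → ℕ`). -/
def degOf (ΔP : Finset E) (α : E) : E → ℕ :=
  fun β => if β ∈ ΔP then 0 else corootCoeffs S α β

/-- A degree: a nonnegative coefficient function supported on `Δ ∖ Δ_P`.  Degrees are
ordered coefficientwise (pointwise). -/
def IsDegree (ΔP : Finset E) (d : E → ℕ) : Prop :=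
  ∀ β, β ∉ S.simples \ ΔP → d β = 0

/-- `α` is a maximal root of the degree `d`: a maximal element of
`{α ∈ R⁺ ∖ R_P⁺ : d(α) ≤ d}`. -/
def IsMaxRoot (ΔP : Finset E) (d : E → ℕ) (α : E) : Prop :=
  α ∈ S.pos ∧ α ∉ posP S ΔP ∧ degOf S ΔP α ≤ d ∧
    ∀ α', α' ∈ S.pos → α' ∉ posP S ΔP → degOf S ΔP α' ≤ d → rootLE S α α' → α' = α

/-- A root `α ∈ R⁺ ∖ R_P⁺` is `P`-cosmall if it is a maximal root of the degree
`d(α)`. -/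
def PCosmall (ΔP : Finset E) (α : E) : Prop :=
  IsMaxRoot S ΔP (degOf S ΔP α) α

/-- `IsGreedy S ΔP l d`: the list `l` is a greedy decomposition of the degree `d`. -/
def IsGreedy (S : RootSystemData E) (ΔP : Finset E) : List E → (E → ℕ) → Prop
  | [], d => d = fun _ => 0
  | α :: t, d => IsMaxRoot S ΔP d α ∧ IsGreedy S ΔP t (d - degOf S ΔP α)

/-- The extended support determined by a (greedy) decomposition: the union of the
supports of its entries. -/
def extSuppOf (l : List E) : Finset E := l.foldr (fun α s => suppR S α ∪ s) ∅

/-- The Weyl group: the subgroup of linear isometries generated by the reflections in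
the roots. -/
def weylGroup : Subgroup (E ≃ₗᵢ[ℝ] E) :=
  Subgroup.closure {g | ∃ α ∈ S.R, g = sRefl α}

/-- The inversion set `I(w) = {γ ∈ R⁺ : w(γ) ∈ -R⁺}`. -/
def invSet (w : E ≃ₗᵢ[ℝ] E) : Finset E := S.pos.filter fun γ => -(w γ) ∈ S.pos

/-- The length of a Weyl group element: the cardinality of its inversion set. -/
def len (w : E ≃ₗᵢ[ℝ] E) : ℕ := (invSet S w).card

/-- The Bruhat order on the Weyl group: generated by multiplication by reflections
which increases length. -/
def bruhatLE (u v : E ≃ₗᵢ[ℝ] E) : Prop :=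
  Relation.ReflTransGen (fun x y => (∃ α ∈ S.R, y = x * sRefl α) ∧ len S x < len S y) u v

/-- The support `Δ(w) = {β ∈ Δ : s_β ⪯ w}` of a Weyl group element. -/
def suppW (w : E ≃ₗᵢ[ℝ] E) : Finset E := S.simples.filter fun β => bruhatLE S (sRefl β) w

/-- The Hecke (Demazure) product: `hecke S u v` is the Bruhat-maximum of
`{u'v' : u' ⪯ u, v' ⪯ v}` (this characterizes the usual Hecke product `u · v` defined
via reduced words). -/
def hecke (u v : E ≃ₗᵢ[ℝ] E) : E ≃ₗᵢ[ℝ] E :=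
  if h : ∃ w, (∃ u' v', bruhatLE S u' u ∧ bruhatLE S v' v ∧ w = u' * v') ∧
      ∀ w', (∃ u' v', bruhatLE S u' u ∧ bruhatLE S v' v ∧ w' = u' * v') → bruhatLE S w' w
  then h.choose else u * v

/-- The Hecke product `g₁ · g₂ · … · gₙ` of a list of Weyl group elements. -/
def heckeFold (l : List (E ≃ₗᵢ[ℝ] E)) : E ≃ₗᵢ[ℝ] E := l.foldl (hecke S) 1

/-- The Hecke product `s_{α₁} · … · s_{αᵣ}` of the reflections along a list of roots. -/
def heckeWord (l : List E) : E ≃ₗᵢ[ℝ] E := heckeFold S (l.map sRefl)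

/-- The parabolic subgroup `W_P` of the Weyl group. -/
def parabolicW (ΔP : Finset E) : Subgroup (E ≃ₗᵢ[ℝ] E) :=
  Subgroup.closure {g | ∃ β ∈ ΔP, g = sRefl β}

/-- The longest element `w_P` of the parabolic subgroup `W_P`. -/
def longestWP (ΔP : Finset E) : E ≃ₗᵢ[ℝ] E :=
  if h : ∃ w ∈ parabolicW ΔP, ∀ w' ∈ parabolicW ΔP, len S w' ≤ len S w
  then h.choose else 1

/-- A choice of greedy decomposition of the degree `d` (the greedy decomposition is
unique up to reordering). -/
def greedyOf (ΔP : Finset E) (d : E → ℕ) : List E :=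
  if h : ∃ l, IsGreedy S ΔP l d then h.choose else []

/-- The element `z_d^P`, determined by `z_d^P w_P = s_{α₁} · … · s_{αᵣ} · w_P` for a
greedy decomposition `(α₁, …, αᵣ)` of `d`. -/
def zP (ΔP : Finset E) (d : E → ℕ) : E ≃ₗᵢ[ℝ] E :=
  heckeFold S ((greedyOf S ΔP d).map sRefl ++ [longestWP S ΔP]) * (longestWP S ΔP)⁻¹

/-- `d ∈ Π_P`: `d` is a minimal degree, i.e. a minimal element of
`{d' : z_d^P ⪯ z_{d'}^P}`. -/
def MemPiP (ΔP : Finset E) (d : E → ℕ) : Prop :=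
  IsDegree S ΔP d ∧
    ∀ d', IsDegree S ΔP d' → bruhatLE S (zP S ΔP d) (zP S ΔP d') → d' ≤ d → d' = d

/-- The element `z_e^B = s_{α₁} · … · s_{αᵣ}` (Hecke product) for a greedy
decomposition `(α₁, …, αᵣ)` of the degree `e ∈ H₂(G/B)`. -/
def zB (e : E → ℕ) : E ≃ₗᵢ[ℝ] E := heckeWord S (greedyOf S ∅ e)

/-- `e ∈ Π_B`: `e` is a minimal degree in `H₂(G/B)`. -/
def MemPiB (e : E → ℕ) : Prop :=
  IsDegree S ∅ e ∧
    ∀ e', IsDegree S ∅ e' → bruhatLE S (zB S e) (zB S e') → e' ≤ e → e' = e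

/-- The generalized cascade of orthogonal roots `B_{R,e}`: the set of positive roots
occurring in a greedy decomposition of `e`. -/
def cascade (e : E → ℕ) : Finset E :=
  S.pos.filter fun α => ∃ l, IsGreedy S ∅ l e ∧ α ∈ l

/-- The generalized chain cascade `C_{R,e}(φ) = {α ∈ B_{R,e} : α ≥ φ}`. -/
def chainCascade (e : E → ℕ) (φ : E) : Finset E :=
  (cascade S e).filter fun α => rootLE S φ α

end

section Helpers

variable {E : Type} [NormedAddCommGroup E] [InnerProductSpace ℝ E] [FiniteDimensional ℝ E]

lemma sRefl_apply (α x : E) :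
    sRefl α x = x - (2 * ⟪x, α⟫ / ⟪α, α⟫) • α := by
  show Submodule.reflection (Submodule.span ℝ {α})ᗮ x = _
  rw [Submodule.reflection_apply, Submodule.starProjection_orthogonal_val,
    Submodule.starProjection_singleton]
  rw [real_inner_comm α x, real_inner_self_eq_norm_sq]
  match_scalars <;> simp <;> ring

lemma inner_coroot_right (x μ : E) : ⟪x, coroot μ⟫ = 2 * ⟪x, μ⟫ / ⟪μ, μ⟫ := by
  rw [coroot, real_inner_smul_right]; ring

lemma simple_ne_zero (S : RootSystemData E) {β : E} (hβ : β ∈ S.simples) : β ≠ 0 := by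
  intro h
  exact S.zero_not_mem (h ▸ S.pos_subset (S.simples_subset hβ))

lemma coeff_zero (S : RootSystemData E) {f : E → ℝ}
    (h : ∑ β ∈ S.simples, f β • β = 0) : ∀ β ∈ S.simples, f β = 0 := by
  have li := S.lin_indep
  rw [linearIndependent_iff'] at li
  intro β hβ
  exact li Finset.univ (fun b => f b)
    (by rw [Finset.sum_coe_sort S.simples (fun b => f b • b)] at *; exact h)
    ⟨β, hβ⟩ (Finset.mem_univ _)

lemma coeff_unique (S : RootSystemData E) {f g : E → ℝ}
    (h : ∑ β ∈ S.simples, f β • β = ∑ β ∈ S.simples, g β • β) :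
    ∀ β ∈ S.simples, f β = g β := by
  intro β hβ
  have := coeff_zero S (f := fun b => f b - g b) (by
    simp only [sub_smul, Finset.sum_sub_distrib, h, sub_self]) β hβ
  linarith

lemma inner_self_pos' {β : E} (h : β ≠ 0) : (0:ℝ) < ⟪β, β⟫ := by
  rw [real_inner_self_eq_norm_sq]
  exact pow_pos (norm_pos_iff.mpr h) 2

lemma two_div_inner_ne_zero {β : E} (hβ : β ≠ 0) : (2 / ⟪β, β⟫ : ℝ) ≠ 0 :=
  div_ne_zero two_ne_zero (ne_of_gt (inner_self_pos' hβ))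

lemma coroot_coeff_unique (S : RootSystemData E) {f g : E → ℝ}
    (h : ∑ β ∈ S.simples, f β • coroot β = ∑ β ∈ S.simples, g β • coroot β) :
    ∀ β ∈ S.simples, f β = g β := by
  intro β hβ
  have h' : ∑ β ∈ S.simples, (f β * (2 / ⟪β, β⟫)) • β
      = ∑ β ∈ S.simples, (g β * (2 / ⟪β, β⟫)) • β := by
    simpa only [coroot, smul_smul, mul_comm] using h
  have := coeff_unique S h' β hβ
  exact mul_right_cancel₀ (two_div_inner_ne_zero (simple_ne_zero S hβ)) this

lemma corootCoeffs_spec (S : RootSystemData E) {μ : E} (hμ : μ ∈ S.pos) :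
    (∀ β, β ∉ S.simples → corootCoeffs S μ β = 0) ∧
      coroot μ = ∑ β ∈ S.simples, (corootCoeffs S μ β : ℝ) • coroot β := by
  obtain ⟨c, hc⟩ := S.coroot_comb μ hμ
  have hex : ∃ c : E → ℕ, (∀ β, β ∉ S.simples → c β = 0) ∧
      coroot μ = ∑ β ∈ S.simples, (c β : ℝ) • coroot β := by
    refine ⟨fun β => if β ∈ S.simples then c β else 0, fun β hβ => by simp [hβ], ?_⟩
    rw [hc]
    exact Finset.sum_congr rfl fun β hβ => by simp [hβ]
  rw [corootCoeffs, dif_pos hex]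
  exact hex.choose_spec

lemma pos_comb (S : RootSystemData E) {μ : E} (h : μ ∈ S.pos) :
    ∃ c : E → ℕ, μ = ∑ β ∈ S.simples, (c β : ℝ) • β :=
  (S.pos_iff μ (S.pos_subset h)).1 h

end Helpers

/-- Let `α ∈ R⁺ ∖ R_P⁺` be a `P`-cosmall root.  Then `(α, γ) = 0`
for every `γ ∈ R_P⁺ ∖ I(s_α)`. -/
theorem statement0 {E : Type} [NormedAddCommGroup E] [InnerProductSpace ℝ E]
    [FiniteDimensional ℝ E] (S : RootSystemData E) (ΔP : Finset E)
    (hΔP : ΔP ⊆ S.simples) (α : E) (hα : PCosmall S ΔP α) :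
    ∀ γ ∈ posP S ΔP, γ ∉ invSet S (sRefl α) → ⟪α, γ⟫ = 0 := by
  obtain ⟨hpos, hnotP, -, hmax⟩ := hα
  intro γ hγP hγinv
  have hαR : α ∈ S.R := S.pos_subset hpos
  have hα0 : α ≠ 0 := fun h => S.zero_not_mem (h ▸ hαR)
  obtain ⟨hγpos, g, hg⟩ := Finset.mem_filter.mp hγP
  have hγR : γ ∈ S.R := S.pos_subset hγpos
  have hγ0 : γ ≠ 0 := fun h => S.zero_not_mem (h ▸ hγR)
  have hαα : (0:ℝ) < ⟪α, α⟫ := inner_self_pos' hα0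
  have hγγ : (0:ℝ) < ⟪γ, γ⟫ := inner_self_pos' hγ0
  obtain ⟨a, ha⟩ := pos_comb S hpos
  set gS : E → ℝ := fun b => if b ∈ ΔP then (g b : ℝ) else 0 with hgSdef
  have hγS : γ = ∑ b ∈ S.simples, gS b • b := by
    have h1 : ∑ b ∈ ΔP, gS b • b = ∑ b ∈ S.simples, gS b • b :=
      Finset.sum_subset hΔP (fun x _ hnx => by simp [hgSdef, hnx])
    rw [hg, ← h1]
    exact Finset.sum_congr rfl fun b hb => by simp [hgSdef, hb]
  have hβ₀ : ∃ β₀ ∈ S.simples, β₀ ∉ ΔP ∧ a β₀ ≠ 0 := by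
    by_contra hcon
    push_neg at hcon
    apply hnotP
    have h1 : ∑ b ∈ ΔP, ((a b : ℤ) : ℝ) • b = ∑ b ∈ S.simples, ((a b : ℤ) : ℝ) • b :=
      Finset.sum_subset hΔP (fun x hx hnx => by rw [hcon x hx hnx]; simp)
    have h2 : α = ∑ b ∈ ΔP, ((a b : ℤ) : ℝ) • b := by
      rw [ha, h1]
      exact Finset.sum_congr rfl fun b _ => by norm_cast
    exact Finset.mem_filter.mpr ⟨hpos, ⟨fun b => (a b : ℤ), h2⟩⟩
  obtain ⟨β₀, hβ₀s, hβ₀P, hβ₀a⟩ := hβ₀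
  obtain ⟨k, hk⟩ := S.crystallographic α hαR γ hγR
  have hk' : 2 * ⟪γ, α⟫ / ⟪α, α⟫ = (k : ℝ) := by rw [← inner_coroot_right, hk]
  -- Step 1: k ≤ 0
  have hk0 : k ≤ 0 := by
    by_contra hkpos
    push_neg at hkpos
    have hs : (sRefl α) γ = γ - (k : ℝ) • α := by rw [sRefl_apply, hk']
    have hsR : (sRefl α) γ ∈ S.R := S.refl_mem α hαR γ hγR
    rcases S.pos_or_neg _ hsR with hc | hc
    · obtain ⟨t, ht⟩ := pos_comb S hc
      have heq2 : γ - (k : ℝ) • α = ∑ b ∈ S.simples, (gS b - (k : ℝ) * a b) • b := by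
        rw [hγS, ha, Finset.smul_sum, ← Finset.sum_sub_distrib]
        exact Finset.sum_congr rfl fun b _ => by rw [sub_smul, mul_smul]
      have h3 : (t β₀ : ℝ) = gS β₀ - (k : ℝ) * a β₀ :=
        coeff_unique S ((ht.symm.trans hs).trans heq2) β₀ hβ₀s
      have hgS0 : gS β₀ = 0 := if_neg hβ₀P
      have h4 : (1 : ℝ) ≤ (k : ℝ) := by exact_mod_cast hkpos
      have h5 : (1 : ℝ) ≤ (a β₀ : ℝ) := by
        exact_mod_cast Nat.one_le_iff_ne_zero.mpr hβ₀a
      have h6 : (0 : ℝ) ≤ (t β₀ : ℝ) := Nat.cast_nonneg _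
      rw [hgS0] at h3
      nlinarith
    · exact hγinv (Finset.mem_filter.mpr ⟨hγpos, hc⟩)
  -- Step 2: 0 ≤ k
  have hk0' : 0 ≤ k := by
    by_contra hkneg
    push_neg at hkneg
    obtain ⟨m, hm⟩ := S.crystallographic γ hγR α hαR
    have hm' : 2 * ⟪α, γ⟫ / ⟪γ, γ⟫ = (m : ℝ) := by rw [← inner_coroot_right, hm]
    have hinnerneg : ⟪γ, α⟫ < 0 := by
      by_contra hge
      push_neg at hge
      have h1 : (0 : ℝ) ≤ (k : ℝ) := by rw [← hk']; positivity
      exact absurd (by exact_mod_cast h1 : (0:ℤ) ≤ k) (not_le.mpr hkneg)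
    have hmneg : (m : ℝ) < 0 := by
      rw [← hm', real_inner_comm γ α]
      exact div_neg_of_neg_of_pos (by linarith) hγγ
    have hmneg' : m < 0 := by exact_mod_cast hmneg
    set n : ℕ := (-m).toNat with hndef
    have hn : (n : ℝ) = -(m : ℝ) := by
      have h1 : ((-m).toNat : ℤ) = -m := Int.toNat_of_nonneg (by omega)
      rw [hndef]
      exact_mod_cast congrArg (fun z : ℤ => (z : ℝ)) h1
    have hn1 : 1 ≤ n := by omega
    set n' : ℕ := (-k).toNat with hn'def
    have hn' : (n' : ℝ) = -(k : ℝ) := by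
      have h1 : ((-k).toNat : ℤ) = -k := Int.toNat_of_nonneg (by omega)
      rw [hn'def]
      exact_mod_cast congrArg (fun z : ℤ => (z : ℝ)) h1
    have hB : (sRefl γ) α = α + (n : ℝ) • γ := by
      rw [sRefl_apply, hm', hn, neg_smul, ← sub_eq_add_neg]
    set B : E := (sRefl γ) α with hBdef
    have hBR : B ∈ S.R := S.refl_mem γ hγR α hαR
    obtain ⟨gn, hgn⟩ := pos_comb S hγpos
    have hBpos : B ∈ S.pos := by
      refine (S.pos_iff B hBR).mpr ⟨fun b => a b + n * gn b, ?_⟩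
      rw [hB, ha, hgn, Finset.smul_sum, ← Finset.sum_add_distrib]
      exact Finset.sum_congr rfl fun b _ => by push_cast; rw [add_smul, mul_smul]
    have hBnotP : B ∉ posP S ΔP := by
      intro hmem
      obtain ⟨-, c, hc⟩ := Finset.mem_filter.mp hmem
      apply hnotP
      refine Finset.mem_filter.mpr ⟨hpos, fun b => c b - n * g b, ?_⟩
      have hα' : α = B - (n : ℝ) • γ := by rw [hB]; abel
      rw [hα', hc, hg, Finset.smul_sum, ← Finset.sum_sub_distrib]
      exact Finset.sum_congr rfl fun b _ => by push_cast; rw [sub_smul, mul_smul]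
    have hBB : ⟪B, B⟫ = ⟪α, α⟫ := (sRefl γ).inner_map_map α α
    have hscal : (2 / ⟪α, α⟫) * (n : ℝ) = (n' : ℝ) * (2 / ⟪γ, γ⟫) := by
      rw [hn, hn', ← hm', ← hk', real_inner_comm γ α]
      field_simp
    have hcorootB : coroot B = coroot α + (n' : ℝ) • coroot γ := by
      simp only [coroot]
      rw [hBB, hB, smul_add, smul_smul, smul_smul, hscal, mul_smul]
    obtain ⟨hA0, hAsum⟩ := corootCoeffs_spec S hpos
    obtain ⟨hB0, hBsum⟩ := corootCoeffs_spec S hBpos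
    obtain ⟨hG0, hGsum⟩ := corootCoeffs_spec S hγpos
    have hGzero : ∀ x ∈ S.simples, x ∉ ΔP → corootCoeffs S γ x = 0 := by
      intro x hx hnx
      have e1 : coroot γ = ∑ b ∈ S.simples, ((2 / ⟪γ, γ⟫) * gS b) • b := by
        simp only [coroot]
        set c2 : ℝ := 2 / ⟪γ, γ⟫ with hc2
        rw [hγS, Finset.smul_sum]
        exact Finset.sum_congr rfl fun b _ => smul_smul _ _ _
      have e2 : coroot γ = ∑ b ∈ S.simples,
          ((corootCoeffs S γ b : ℝ) * (2 / ⟪b, b⟫)) • b := by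
        rw [hGsum]
        exact Finset.sum_congr rfl fun b _ => by rw [coroot, smul_smul]
      have h1 := coeff_unique S (e2.symm.trans e1) x hx
      simp only [hgSdef, if_neg hnx, mul_zero] at h1
      have h2 := (mul_eq_zero.mp h1).resolve_right
        (two_div_inner_ne_zero (simple_ne_zero S hx))
      exact_mod_cast h2
    have hdeg : degOf S ΔP B ≤ degOf S ΔP α := by
      rw [Pi.le_def]
      intro x
      by_cases hx1 : x ∈ ΔP
      · simp [degOf, hx1]
      · simp only [degOf, if_neg hx1]
        by_cases hx2 : x ∈ S.simples
        · have hsum : ∑ b ∈ S.simples, (corootCoeffs S B b : ℝ) • coroot b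
              = ∑ b ∈ S.simples,
                ((corootCoeffs S α b : ℝ) + (n' : ℝ) * (corootCoeffs S γ b : ℝ)) • coroot b := by
            rw [← hBsum, hcorootB, hAsum, hGsum, Finset.smul_sum,
              ← Finset.sum_add_distrib]
            exact Finset.sum_congr rfl fun b _ => by rw [add_smul, mul_smul]
          have h1 := coroot_coeff_unique S hsum x hx2
          rw [hGzero x hx2 hx1] at h1
          simp only [Nat.cast_zero, mul_zero, add_zero] at h1
          have h2 : corootCoeffs S B x = corootCoeffs S α x := by exact_mod_cast h1
          exact le_of_eq h2
        · rw [hB0 x hx2, hA0 x hx2]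
    have hle : rootLE S α B := by
      refine ⟨fun b => n * gn b, ?_⟩
      rw [hB, add_sub_cancel_left, hgn, Finset.smul_sum]
      exact Finset.sum_congr rfl fun b _ => by push_cast; rw [mul_smul]
    have hBa : B = α := hmax B hBpos hBnotP hdeg hle
    have hzero : (n : ℝ) • γ = 0 := by
      have h1 : α + (n : ℝ) • γ = α := hB.symm.trans hBa
      simpa using h1
    have hnne : (n : ℝ) ≠ 0 := Nat.cast_ne_zero.mpr (by omega)
    exact hγ0 ((smul_eq_zero.mp hzero).resolve_left hnne)
  have hkz : (k : ℝ) = 0 := by exact_mod_cast le_antisymm hk0 hk0'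
  have h1 : 2 * ⟪γ, α⟫ / ⟪α, α⟫ = 0 := by rw [hk', hkz]
  rcases div_eq_zero_iff.mp h1 with h2 | h2
  · rw [real_inner_comm]; linarith
  · linarith
end

section
/- Every locally high root is B-cosmall: if φ ∈ R^+ is the highest root of the root subsystem R(φ) generated by Δ(φ), then every α ∈ R^+ satisfying φ ≤ α and α^∨ ≤ φ^∨ (the inequality of coroots taken in ZΔ^∨) equals φ. -/
/-!
Common setup: a finite crystallographic root system `R` spanning a Euclidean space `E`,
with a base of simple roots, positive roots, Weyl group, Bruhat order, Hecke (Demazure)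
product, degrees, greedy decompositions, extended supports, minimal degrees and
generalized cascades of orthogonal roots, following the conventions of the paper.
-/

open scoped RealInnerProductSpace BigOperators

attribute [local instance] Classical.propDecidable

section Helpers

variable {E : Type} [NormedAddCommGroup E] [InnerProductSpace ℝ E] [FiniteDimensional ℝ E]

lemma simples_indep (S : RootSystemData E) {r : E → ℝ}
    (h : ∑ β ∈ S.simples, r β • β = 0) : ∀ β ∈ S.simples, r β = 0 := by
  intro β hβ
  have key := Fintype.linearIndependent_iff.mp S.lin_indep (fun b => r b)
  refine key ?_ ⟨β, hβ⟩
  rw [Finset.univ_eq_attach, Finset.sum_attach S.simples (fun x => r x • x)]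
  exact h

lemma simples_unique (S : RootSystemData E) {r s : E → ℝ}
    (h : ∑ β ∈ S.simples, r β • β = ∑ β ∈ S.simples, s β • β) :
    ∀ β ∈ S.simples, r β = s β := by
  intro β hβ
  have h0 : ∑ β ∈ S.simples, (r β - s β) • β = 0 := by
    simp [sub_smul, Finset.sum_sub_distrib, h]
  have := simples_indep S h0 β hβ
  linarith

lemma inner_self_ne (S : RootSystemData E) {β : E} (hβ : β ∈ S.R) : ⟪β, β⟫ ≠ 0 := by
  have hne : β ≠ 0 := fun h => S.zero_not_mem (h ▸ hβ)
  exact inner_self_ne_zero.mpr hne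

lemma coroot_sum_simples (S : RootSystemData E) (c : E → ℝ) :
    ∑ β ∈ S.simples, c β • coroot β = ∑ β ∈ S.simples, (c β * (2 / ⟪β, β⟫)) • β := by
  simp [coroot, smul_smul]

end Helpers

/-- Every locally high root is `B`-cosmall:  if `φ ∈ R⁺` is the
highest root of the root subsystem `R(φ)` generated by `Δ(φ)`, then every `α ∈ R⁺`
satisfying `φ ≤ α` and `α^∨ ≤ φ^∨` equals `φ`. -/
theorem statement2 {E : Type} [NormedAddCommGroup E] [InnerProductSpace ℝ E]
    [FiniteDimensional ℝ E] (S : RootSystemData E) (φ : E) (hφ : IsLocallyHigh S φ)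
    (α : E) (hα : α ∈ S.pos) (h₁ : rootLE S φ α) (h₂ : corootLE S α φ) :
    α = φ := by
  classical
  obtain ⟨hφpos, hhigh⟩ := hφ
  have hαR : α ∈ S.R := S.pos_subset hα
  have hφR : φ ∈ S.R := S.pos_subset hφpos
  obtain ⟨a, ha⟩ := (S.pos_iff α hαR).mp hα
  obtain ⟨b, hb⟩ := (S.pos_iff φ hφR).mp hφpos
  obtain ⟨aC, haC⟩ := S.coroot_comb α hα
  obtain ⟨fC, hfC⟩ := S.coroot_comb φ hφpos
  obtain ⟨c, hc⟩ := h₂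
  -- inner products are nonzero
  have hipα : ⟪α, α⟫ ≠ 0 := inner_self_ne S hαR
  have hipφ : ⟪φ, φ⟫ ≠ 0 := inner_self_ne S hφR
  have hipβ : ∀ β ∈ S.simples, ⟪β, β⟫ ≠ 0 := fun β hβ =>
    inner_self_ne S (S.pos_subset (S.simples_subset hβ))
  -- coroot coefficients versus root coefficients
  have e1 := haC.trans (coroot_sum_simples S (fun β => (aC β : ℝ)))
  have e2 : coroot α = ∑ β ∈ S.simples, ((2 / ⟪α, α⟫) * (a β : ℝ)) • β := by
    rw [coroot, ha, Finset.smul_sum]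
    exact Finset.sum_congr rfl fun β _ => by rw [smul_smul]
  have hA := simples_unique S (e1.symm.trans e2)
  have e1' := hfC.trans (coroot_sum_simples S (fun β => (fC β : ℝ)))
  have e2' : coroot φ = ∑ β ∈ S.simples, ((2 / ⟪φ, φ⟫) * (b β : ℝ)) • β := by
    rw [coroot, hb, Finset.smul_sum]
    exact Finset.sum_congr rfl fun β _ => by rw [smul_smul]
  have hF := simples_unique S (e1'.symm.trans e2')
  -- fC = aC + c on simples
  have e3 : coroot φ = ∑ β ∈ S.simples, ((aC β : ℝ) + (c β : ℝ)) • coroot β := by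
    have h4 : coroot φ = (∑ β ∈ S.simples, (c β : ℝ) • coroot β) + coroot α :=
      sub_eq_iff_eq_add.mp hc
    rw [h4, haC, ← Finset.sum_add_distrib]
    exact Finset.sum_congr rfl fun β _ => by rw [add_smul]; abel
  have e4 := (e1'.symm.trans
    (e3.trans (coroot_sum_simples S (fun β => (aC β : ℝ) + (c β : ℝ)))))
  have hFC : ∀ β ∈ S.simples, (fC β : ℝ) = (aC β : ℝ) + (c β : ℝ) := by
    intro β hβ
    have k := simples_unique S e4 β hβ
    have hne : (2 / ⟪β, β⟫ : ℝ) ≠ 0 := div_ne_zero two_ne_zero (hipβ β hβ)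
    exact mul_right_cancel₀ hne k
  -- if b β ≥ 1 then β is in the support of φ
  have hsupp : ∀ β ∈ S.simples, 1 ≤ b β → β ∈ suppR S φ := by
    intro β hβ hb1
    refine Finset.mem_filter.mpr ⟨hβ, ?_⟩
    refine ⟨fun γ => b γ - (if γ = β then 1 else 0), ?_⟩
    have hterm : ∀ γ ∈ S.simples,
        ((b γ - (if γ = β then 1 else 0) : ℕ) : ℝ) • γ
          = ((b γ : ℝ) - (if γ = β then (1 : ℝ) else 0)) • γ := by
      intro γ _
      congr 1
      by_cases h : γ = β
      · subst h; rw [if_pos rfl, if_pos rfl, Nat.cast_sub hb1]; norm_num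
      · rw [if_neg h, if_neg h]; norm_num
    rw [Finset.sum_congr rfl hterm]
    have hsplit : ∑ γ ∈ S.simples, ((b γ : ℝ) - (if γ = β then (1 : ℝ) else 0)) • γ
        = (∑ γ ∈ S.simples, (b γ : ℝ) • γ)
          - ∑ γ ∈ S.simples, (if γ = β then (1 : ℝ) else 0) • γ := by
      rw [← Finset.sum_sub_distrib]
      exact Finset.sum_congr rfl fun γ _ => by rw [sub_smul]
    have hone : ∑ γ ∈ S.simples, (if γ = β then (1 : ℝ) else 0) • γ = β := by
      simp [ite_smul, hβ]
    rw [hsplit, hone, ← hb]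
  -- a β vanishes off the support of φ
  have hvan : ∀ β ∈ S.simples, β ∉ suppR S φ → (a β : ℝ) = 0 := by
    intro β hβ hns
    have hb0 : b β = 0 := by
      by_contra h
      exact hns (hsupp β hβ (Nat.one_le_iff_ne_zero.mpr h))
    have hf0 : (fC β : ℝ) = 0 := by
      have := hF β hβ
      rw [hb0] at this
      simp only [Nat.cast_zero, mul_zero] at this
      have hne : (2 / ⟪β, β⟫ : ℝ) ≠ 0 := div_ne_zero two_ne_zero (hipβ β hβ)
      exact (mul_eq_zero.mp this).resolve_right hne
    have ha0 : (aC β : ℝ) = 0 := by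
      have h5 := hFC β hβ
      rw [hf0] at h5
      have h6 : (0:ℝ) ≤ (aC β : ℝ) := Nat.cast_nonneg _
      have h7 : (0:ℝ) ≤ (c β : ℝ) := Nat.cast_nonneg _
      linarith
    have h8 := hA β hβ
    rw [ha0, zero_mul] at h8
    have hne2 : (2 / ⟪α, α⟫ : ℝ) ≠ 0 := div_ne_zero two_ne_zero hipα
    exact ((mul_eq_zero.mp h8.symm).resolve_left hne2)
  -- α lies in ℤΔ(φ), hence in R(φ)
  have hsub : suppR S φ ⊆ S.simples := Finset.filter_subset _ _
  have hαZ : inZSpan (suppR S φ) α := by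
    refine ⟨fun β => (a β : ℤ), ?_⟩
    have : α = ∑ β ∈ S.simples, (((a β : ℤ) : ℝ)) • β := by
      rw [ha]; exact Finset.sum_congr rfl fun β _ => by push_cast; ring_nf
    rw [this]
    exact (Finset.sum_subset hsub fun β hβ hnβ => by
      rw [show (((a β : ℤ) : ℝ)) = 0 by push_cast; exact hvan β hβ hnβ, zero_smul]).symm
  have hmem : α ∈ subsysOf S φ := Finset.mem_filter.mpr ⟨hαR, hαZ⟩
  -- locally high gives α ≤ φ; antisymmetry
  obtain ⟨d, hd⟩ := hhigh α hmem
  obtain ⟨e, he⟩ := h₁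
  have h0 : ∑ β ∈ S.simples, ((e β : ℝ) + (d β : ℝ)) • β = 0 := by
    have : (α - φ) + (φ - α) = 0 := by abel
    rw [he, hd, ← Finset.sum_add_distrib] at this
    rw [← this]
    exact Finset.sum_congr rfl fun β _ => by rw [add_smul]
  have hz := simples_indep S h0
  have he0 : α - φ = 0 := by
    rw [he]
    refine Finset.sum_eq_zero fun β hβ => ?_
    have := hz β hβ
    have h6 : (0:ℝ) ≤ (e β : ℝ) := Nat.cast_nonneg _
    have h7 : (0:ℝ) ≤ (d β : ℝ) := Nat.cast_nonneg _
    have : (e β : ℝ) = 0 := by linarith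
    rw [this, zero_smul]
  exact sub_eq_zero.mp he0
end

section
/- Converse of the addition theorem for greedy decompositions: let d_1, …, d_k be degrees such that Δ̃(d_1), …, Δ̃(d_k) are pairwise totally disjoint, and let (α_1, …, α_r) be a greedy decomposition of d_1 + ⋯ + d_k. Then there exist unique greedy decompositions (α_1^i, …, α_{r_i}^i) of d_i for each 1 ≤ i ≤ k such that r = r_1 + ⋯ + r_k and each (α_1^i, …, α_{r_i}^i) is a subsequence of (α_1, …, α_r). -/
/-!
Common setup: a finite crystallographic root system `R` spanning a Euclidean space `E`,
with a base of simple roots, positive roots, Weyl group, Bruhat order, Hecke (Demazure)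
product, degrees, greedy decompositions, extended supports, minimal degrees and
generalized cascades of orthogonal roots, following the conventions of the paper.
-/

open scoped RealInnerProductSpace BigOperators

attribute [local instance] Classical.propDecidable

namespace RS7
set_option linter.unusedSectionVars false
set_option maxHeartbeats 1000000

open Finset

variable {E : Type} [NormedAddCommGroup E] [InnerProductSpace ℝ E] [FiniteDimensional ℝ E]
variable (S : RootSystemData E)

lemma root_ne_zero {α : E} (h : α ∈ S.R) : α ≠ 0 := fun e => S.zero_not_mem (e ▸ h)

lemma root_inner_pos {α : E} (h : α ∈ S.R) : (0:ℝ) < ⟪α, α⟫ := by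
  rw [real_inner_self_eq_norm_sq]
  exact pow_pos (norm_pos_iff.2 (root_ne_zero S h)) 2

lemma inner_self_pos' {α : E} (h : α ≠ 0) : (0:ℝ) < ⟪α, α⟫ := by
  rw [real_inner_self_eq_norm_sq]
  exact pow_pos (norm_pos_iff.2 h) 2

lemma simple_mem_R {β : E} (h : β ∈ S.simples) : β ∈ S.R :=
  S.pos_subset (S.simples_subset h)

/-- Uniqueness of coefficients over the simple roots. -/
lemma uniq {f g : E → ℝ}
    (h : ∑ β ∈ S.simples, f β • β = ∑ β ∈ S.simples, g β • β) :
    ∀ β ∈ S.simples, f β = g β := by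
  have h0 : ∑ x ∈ (Finset.univ : Finset S.simples), (f x.1 - g x.1) • (x.1 : E) = 0 := by
    rw [Finset.univ_eq_attach]
    rw [Finset.sum_attach S.simples (fun β => (f β - g β) • β)]
    simp only [sub_smul, Finset.sum_sub_distrib, h, sub_self]
  intro β hβ
  have h1 := linearIndependent_iff'.mp S.lin_indep Finset.univ (fun x => f x.1 - g x.1) h0
    ⟨β, hβ⟩ (Finset.mem_univ _)
  have h2 : f β - g β = 0 := h1
  linarith

/-- The sum `∑ (if β' = β then t else 0) • β' = t • β`. -/
lemma sum_delta (t : ℝ) {β : E} (hβ : β ∈ S.simples) :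
    ∑ β' ∈ S.simples, (if β' = β then t else 0) • β' = t • β := by
  rw [Finset.sum_eq_single β]
  · simp
  · intro b _ hb; simp [hb]
  · intro h; exact absurd hβ h

/-- Canonical nonnegative coefficients of a positive root. -/
noncomputable def cN (α : E) : E → ℕ :=
  if h : nonnegComb S.simples α then h.choose else fun _ => 0

lemma cN_spec {α : E} (h : α ∈ S.pos) :
    α = ∑ β ∈ S.simples, ((cN S α β : ℝ)) • β := by
  have hn : nonnegComb S.simples α := (S.pos_iff α (S.pos_subset h)).1 h
  rw [cN, dif_pos hn]
  exact hn.choose_spec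

/-- The formula for the reflection `sRefl`. -/
lemma sRefl_apply (α x : E) (hα : α ≠ 0) :
    sRefl α x = x - (2 * ⟪α, x⟫ / ⟪α, α⟫) • α := by
  have h2 : ((Submodule.span ℝ {α})ᗮ.starProjection x : E)
      = x - (⟪α, x⟫ / (‖α‖ ^ 2 : ℝ)) • α := by
    rw [Submodule.starProjection_orthogonal_val, Submodule.starProjection_singleton ℝ x]
    norm_cast
  have h1 : sRefl α x = 2 • ((Submodule.span ℝ {α})ᗮ.starProjection x : E) - x :=
    Submodule.reflection_apply _
  rw [h1, h2, ← real_inner_self_eq_norm_sq]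
  have hne : ⟪α, α⟫ ≠ 0 := ne_of_gt (inner_self_pos' hα)
  have h3 : (2 * ⟪α, x⟫ / ⟪α, α⟫) = 2 * (⟪α, x⟫ / ⟪α, α⟫) := by ring
  rw [h3]
  module

lemma pairInt {α β : E} (hα : α ∈ S.R) (hβ : β ∈ S.R) :
    ∃ n : ℤ, 2 * ⟪β, α⟫ / ⟪α, α⟫ = (n : ℝ) := by
  obtain ⟨n, hn⟩ := S.crystallographic α hα β hβ
  refine ⟨n, ?_⟩
  rw [coroot, real_inner_smul_right] at hn
  rw [← hn]; ring

lemma coeff_unique {α : E} (h : α ∈ S.pos) {f : E → ℝ}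
    (hf : α = ∑ β ∈ S.simples, f β • β) :
    ∀ β ∈ S.simples, f β = (cN S α β : ℝ) :=
  uniq S (hf.symm.trans (cN_spec S h))

/-- A root cannot have coefficients of mixed signs. -/
lemma not_mixed {x : E} (hx : x ∈ S.R) {f : E → ℝ}
    (hrep : x = ∑ β ∈ S.simples, f β • β) {β₁ β₂ : E}
    (h1 : β₁ ∈ S.simples) (h2 : β₂ ∈ S.simples) (hp : 0 < f β₁) (hn : f β₂ < 0) :
    False := by
  rcases S.pos_or_neg x hx with hpos | hneg
  · have := coeff_unique S hpos hrep β₂ h2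
    have : (0:ℝ) ≤ f β₂ := by rw [this]; positivity
    linarith
  · have hrep' : -x = ∑ β ∈ S.simples, ((cN S (-x) β : ℝ)) • β := cN_spec S hneg
    have hrep2 : x = ∑ β ∈ S.simples, (-(cN S (-x) β : ℝ)) • β := by
      calc x = -(-x) := (neg_neg x).symm
        _ = -(∑ β ∈ S.simples, ((cN S (-x) β : ℝ)) • β) := by rw [← hrep']
        _ = ∑ β ∈ S.simples, (-(cN S (-x) β : ℝ)) • β := by
            rw [← Finset.sum_neg_distrib]; simp only [neg_smul]
    have := uniq S (hrep.symm.trans hrep2) β₁ h1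
    have : f β₁ ≤ 0 := by rw [this]; simp only [neg_nonpos]; positivity
    linarith

/-- A root with nonnegative coefficients, one positive, is positive. -/
lemma pos_of_coeffs {x : E} (hx : x ∈ S.R) {f : E → ℝ}
    (hrep : x = ∑ β ∈ S.simples, f β • β)
    (hnn : ∀ β ∈ S.simples, 0 ≤ f β) {β₀ : E} (h0 : β₀ ∈ S.simples) (hp : 0 < f β₀) :
    x ∈ S.pos := by
  rcases S.pos_or_neg x hx with hpos | hneg
  · exact hpos
  · exfalso
    have hrep' : -x = ∑ β ∈ S.simples, ((cN S (-x) β : ℝ)) • β := cN_spec S hneg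
    have hrep2 : x = ∑ β ∈ S.simples, (-(cN S (-x) β : ℝ)) • β := by
      calc x = -(-x) := (neg_neg x).symm
        _ = -(∑ β ∈ S.simples, ((cN S (-x) β : ℝ)) • β) := by rw [← hrep']
        _ = ∑ β ∈ S.simples, (-(cN S (-x) β : ℝ)) • β := by
            rw [← Finset.sum_neg_distrib]; simp only [neg_smul]
    have := uniq S (hrep.symm.trans hrep2) β₀ h0
    have : f β₀ ≤ 0 := by rw [this]; simp only [neg_nonpos]; positivity
    linarith

/-- Key lemma: if the inner product of two roots is negative, their sum is a root. -/
lemma add_root {α β : E} (hα : α ∈ S.R) (hβ : β ∈ S.R)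
    (hneg : ⟪α, β⟫ < 0) (hne : α + β ≠ 0) : α + β ∈ S.R := by
  obtain ⟨n, hn⟩ := pairInt S hβ hα   -- n = 2⟪α,β⟫/⟪β,β⟫
  obtain ⟨m, hm⟩ := pairInt S hα hβ   -- m = 2⟪β,α⟫/⟪α,α⟫
  have hββ := root_inner_pos S hβ
  have hαα := root_inner_pos S hα
  have hn_neg : (n:ℝ) < 0 := by
    rw [← hn]
    apply div_neg_of_neg_of_pos _ hββ
    linarith
  have hm_neg : (m:ℝ) < 0 := by
    rw [← hm]
    have : ⟪β, α⟫ < 0 := by rwa [real_inner_comm]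
    apply div_neg_of_neg_of_pos _ hαα
    linarith
  by_cases hn1 : n = -1
  · -- sRefl β α = α - n • β = α + β
    have h := S.refl_mem β hβ α hα
    rw [sRefl_apply β α (root_ne_zero S hβ)] at h
    have hfor : 2 * ⟪β, α⟫ / ⟪β, β⟫ = (n:ℝ) := by
      rw [← hn, real_inner_comm]
    rw [hfor, hn1] at h
    push_cast at h
    simpa [sub_eq_add_neg, neg_smul] using h
  by_cases hm1 : m = -1
  · have h := S.refl_mem α hα β hβ
    rw [sRefl_apply α β (root_ne_zero S hα)] at h
    have hfor : 2 * ⟪α, β⟫ / ⟪α, α⟫ = (m:ℝ) := by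
      rw [← hm, real_inner_comm]
    rw [hfor, hm1] at h
    push_cast at h
    have : β + α ∈ S.R := by simpa [sub_eq_add_neg, neg_smul] using h
    rwa [add_comm] at this
  -- n, m ≤ -2 : contradiction via Cauchy-Schwarz
  exfalso
  have hnz : n < 0 := by exact_mod_cast hn_neg
  have hmz : m < 0 := by exact_mod_cast hm_neg
  have hn2 : n ≤ -2 := by
    rcases eq_or_lt_of_le (by omega : n ≤ -1) with h | h
    · exact absurd h.symm (Ne.symm hn1)
    · omega
  have hm2 : m ≤ -2 := by
    rcases eq_or_lt_of_le (by omega : m ≤ -1) with h | h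
    · exact absurd h.symm (Ne.symm hm1)
    · omega
  have hprod : (4:ℝ) ≤ (n:ℝ) * (m:ℝ) := by
    have h4 : (4:ℤ) ≤ n * m := by nlinarith
    exact_mod_cast h4
  have hio : (n:ℝ) * (m:ℝ) * (⟪α,α⟫ * ⟪β,β⟫) = 4 * ⟪α,β⟫^2 := by
    rw [← hn, ← hm, real_inner_comm β α]
    field_simp
    ring
  have hCS2 : ⟪α,α⟫ * ⟪β,β⟫ ≤ ⟪α,β⟫^2 := by
    have hD : 0 < ⟪α,α⟫ * ⟪β,β⟫ := mul_pos hαα hββ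
    nlinarith
  have habs : |⟪α,β⟫| ≤ ‖α‖ * ‖β‖ := abs_real_inner_le_norm α β
  have hNcs : ⟪α,α⟫ * ⟪β,β⟫ = (‖α‖ * ‖β‖)^2 := by
    rw [real_inner_self_eq_norm_sq, real_inner_self_eq_norm_sq]; ring
  have hNpos : (0:ℝ) < ‖α‖ * ‖β‖ := by
    apply mul_pos <;> rw [norm_pos_iff]
    exacts [root_ne_zero S hα, root_ne_zero S hβ]
  have heq : |⟪α,β⟫| = ‖α‖ * ‖β‖ := by
    nlinarith [abs_nonneg ⟪α,β⟫, sq_abs ⟪α,β⟫]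
  have h1 : |⟪α,β⟫ / (‖α‖ * ‖β‖)| = 1 := by
    rw [abs_div, heq, abs_of_pos hNpos, div_self (ne_of_gt hNpos)]
  obtain ⟨-, r, hr0, hrβ⟩ := (abs_real_inner_div_norm_mul_norm_eq_one_iff α β).1 h1
  have hmem : r • α ∈ S.R := by rw [← hrβ]; exact hβ
  rcases S.reduced α hα r hmem with h | h
  · rw [h, one_smul] at hrβ
    rw [hrβ] at hneg
    linarith
  · rw [h] at hrβ
    apply hne
    rw [hrβ]
    simp

lemma simples_inner_nonpos {β β' : E} (hβ : β ∈ S.simples) (hβ' : β' ∈ S.simples)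
    (hne : β ≠ β') : ⟪β, β'⟫ ≤ 0 := by
  by_contra h
  push_neg at h
  have hni : ⟪β, -β'⟫ < 0 := by rw [inner_neg_right]; linarith
  have hne0 : β + -β' ≠ 0 := by
    intro h0
    exact hne (by linear_combination (norm := module) h0)
  have hsum : β + -β' ∈ S.R :=
    add_root S (simple_mem_R S hβ) (S.neg_mem _ (simple_mem_R S hβ')) hni hne0
  have hrep : β + -β' = ∑ x ∈ S.simples,
      ((if x = β then (1:ℝ) else 0) - if x = β' then (1:ℝ) else 0) • x := by
    simp only [sub_smul, Finset.sum_sub_distrib, sum_delta S 1 hβ, sum_delta S 1 hβ',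
      one_smul]
    abel
  exact not_mixed S hsum hrep hβ hβ' (by simp [hne]) (by simp [Ne.symm hne, hne])

/-- The support of a positive root as coefficient support. -/
noncomputable def suppN (α : E) : Finset E := S.simples.filter (fun β => cN S α β ≠ 0)

lemma suppR_eq_suppN {α : E} (hα : α ∈ S.pos) : suppR S α = suppN S α := by
  ext β
  simp only [suppR, suppN, Finset.mem_filter]
  constructor
  · rintro ⟨hβ, c, hc⟩
    refine ⟨hβ, ?_⟩
    have hrep : α = ∑ x ∈ S.simples,
        (((c x : ℝ)) + if x = β then 1 else 0) • x := by
      simp only [add_smul, Finset.sum_add_distrib, sum_delta S 1 hβ, one_smul]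
      rw [← hc]; abel
    have := coeff_unique S hα hrep β hβ
    intro h0
    rw [h0] at this
    simp at this
    linarith [this]
  · rintro ⟨hβ, h0⟩
    refine ⟨hβ, fun x => cN S α x - if x = β then 1 else 0, ?_⟩
    have h1 : 1 ≤ cN S α β := Nat.one_le_iff_ne_zero.2 h0
    have hcast : ∀ x ∈ S.simples,
        ((cN S α x - if x = β then 1 else 0 : ℕ) : ℝ)
          = (cN S α x : ℝ) - if x = β then 1 else 0 := by
      intro x _
      by_cases hx : x = β
      · rw [hx, if_pos rfl, if_pos rfl, Nat.cast_sub h1, Nat.cast_one]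
      · rw [if_neg hx, if_neg hx, Nat.sub_zero, sub_zero]
    rw [Finset.sum_congr rfl (fun x hx => by rw [hcast x hx])]
    simp only [sub_smul, Finset.sum_sub_distrib, sum_delta S 1 hβ, one_smul]
    rw [← cN_spec S hα]

lemma mem_posP_iff {ΔP : Finset E} (hΔP : ΔP ⊆ S.simples) {α : E} (hα : α ∈ S.pos) :
    α ∈ posP S ΔP ↔ ∀ β ∈ S.simples, β ∉ ΔP → cN S α β = 0 := by
  constructor
  · intro h
    obtain ⟨-, c, hc⟩ := Finset.mem_filter.1 h
    have hrep : α = ∑ β ∈ S.simples, (if β ∈ ΔP then (c β : ℝ) else 0) • β := by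
      rw [hc, ← Finset.sum_subset hΔP (fun x _ hx => by rw [if_neg hx, zero_smul])]
      exact Finset.sum_congr rfl (fun x hx => by rw [if_pos hx])
    intro β hβ hβP
    have := coeff_unique S hα hrep β hβ
    rw [if_neg hβP] at this
    exact_mod_cast this.symm
  · intro h
    refine Finset.mem_filter.2 ⟨hα, fun β => (cN S α β : ℤ), ?_⟩
    have h2 := cN_spec S hα
    nth_rewrite 1 [h2]
    rw [← Finset.sum_subset hΔP (fun x hx hxP => by rw [h x hx hxP]; simp)]
    exact Finset.sum_congr rfl (fun x _ => by norm_num)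

lemma corootCoeffs_spec {α : E} (hα : α ∈ S.pos) :
    (∀ β, β ∉ S.simples → corootCoeffs S α β = 0) ∧
      coroot α = ∑ β ∈ S.simples, ((corootCoeffs S α β : ℝ)) • coroot β := by
  have hex : ∃ c : E → ℕ, (∀ β, β ∉ S.simples → c β = 0) ∧
      coroot α = ∑ β ∈ S.simples, (c β : ℝ) • coroot β := by
    obtain ⟨c, hc⟩ := S.coroot_comb α hα
    refine ⟨fun β => if β ∈ S.simples then c β else 0, fun β hβ => by simp [hβ], ?_⟩
    rw [hc]
    exact Finset.sum_congr rfl (fun x hx => by simp only []; rw [if_pos hx])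
  rw [corootCoeffs, dif_pos hex]
  exact hex.choose_spec

lemma corootCoeffs_eq {α : E} (hα : α ∈ S.pos) {β : E} (hβ : β ∈ S.simples) :
    (corootCoeffs S α β : ℝ) = (cN S α β : ℝ) * ⟪β, β⟫ / ⟪α, α⟫ := by
  have hαR : α ∈ S.R := S.pos_subset hα
  have hαα := root_inner_pos S hαR
  have hrep := cN_spec S hα
  have key : ∀ t : ℝ, t • α = ∑ x ∈ S.simples, (t * (cN S α x : ℝ)) • x := by
    intro t
    calc t • α = t • (∑ x ∈ S.simples, ((cN S α x : ℝ)) • x) := by rw [← hrep]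
      _ = ∑ x ∈ S.simples, (t * (cN S α x : ℝ)) • x := by
          rw [Finset.smul_sum]
          exact Finset.sum_congr rfl (fun x _ => smul_smul t _ x)
  have h1 : coroot α = ∑ x ∈ S.simples, ((2 / ⟪α, α⟫) * (cN S α x : ℝ)) • x := by
    rw [coroot]; exact key _
  have h2 : coroot α = ∑ x ∈ S.simples,
      ((corootCoeffs S α x : ℝ) * (2 / ⟪x, x⟫)) • x := by
    rw [(corootCoeffs_spec S hα).2]
    exact Finset.sum_congr rfl (fun x _ => by rw [coroot, smul_smul])
  have := uniq S (h2.symm.trans h1) β hβ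
  have hββ := root_inner_pos S (simple_mem_R S hβ)
  field_simp at this ⊢
  linarith [this]

lemma corootCoeffs_zero_iff {α : E} (hα : α ∈ S.pos) {β : E} (hβ : β ∈ S.simples) :
    corootCoeffs S α β = 0 ↔ cN S α β = 0 := by
  have h := corootCoeffs_eq S hα hβ
  have hαα := root_inner_pos S (S.pos_subset hα)
  have hββ := root_inner_pos S (simple_mem_R S hβ)
  constructor
  · intro h0
    rw [h0] at h
    have : (cN S α β : ℝ) * ⟪β, β⟫ / ⟪α, α⟫ = 0 := by exact_mod_cast h.symm
    have := (div_eq_zero_iff.1 this).resolve_right (ne_of_gt hαα)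
    rcases mul_eq_zero.1 this with h' | h'
    · exact_mod_cast h'
    · exact absurd h' (ne_of_gt hββ)
  · intro h0
    rw [h0] at h
    simp only [Nat.cast_zero, zero_mul, zero_div] at h
    exact_mod_cast h

lemma degOf_ne_zero_iff {ΔP : Finset E} {α : E} (hα : α ∈ S.pos) (β : E) :
    degOf S ΔP α β ≠ 0 ↔ β ∈ S.simples ∧ β ∉ ΔP ∧ cN S α β ≠ 0 := by
  unfold degOf
  by_cases hP : β ∈ ΔP
  · simp [hP]
  · rw [if_neg hP]
    by_cases hs : β ∈ S.simples
    · have hzi := corootCoeffs_zero_iff S hα hs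
      constructor
      · intro h; exact ⟨hs, hP, fun h0 => h (hzi.2 h0)⟩
      · rintro ⟨-, -, h⟩ h0; exact h (hzi.1 h0)
    · simp [(corootCoeffs_spec S hα).1 β hs, hs]

lemma inner_expand {α : E} (hα : α ∈ S.pos) (β : E) :
    ⟪β, α⟫ = ∑ x ∈ S.simples, (cN S α x : ℝ) * ⟪β, x⟫ := by
  nth_rewrite 1 [cN_spec S hα]
  rw [inner_sum]
  exact Finset.sum_congr rfl (fun x _ => real_inner_smul_right _ _ _)

lemma term_nonpos {α β : E} (hα : α ∈ S.pos) (hβ : β ∈ S.simples)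
    (hns : β ∉ suppN S α) : ∀ x ∈ S.simples, (cN S α x : ℝ) * ⟪β, x⟫ ≤ 0 := by
  intro x hx
  by_cases h0 : cN S α x = 0
  · simp [h0]
  · have hxs : x ∈ suppN S α := Finset.mem_filter.2 ⟨hx, h0⟩
    have hne : β ≠ x := fun h => hns (h ▸ hxs)
    have h1 := simples_inner_nonpos S hβ hx hne
    have h2 : (0:ℝ) ≤ (cN S α x : ℝ) := by positivity
    nlinarith

lemma inner_nonpos_of_not_supp {α β : E} (hα : α ∈ S.pos) (hβ : β ∈ S.simples)
    (hns : β ∉ suppN S α) : ⟪β, α⟫ ≤ 0 := by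
  rw [inner_expand S hα β]
  exact Finset.sum_nonpos (term_nonpos S hα hβ hns)

lemma orth_of_inner_zero {α β : E} (hα : α ∈ S.pos) (hβ : β ∈ S.simples)
    (hns : β ∉ suppN S α) (h0 : ⟪β, α⟫ = 0) :
    ∀ x ∈ suppN S α, ⟪β, x⟫ = 0 := by
  have hsum : ∑ x ∈ S.simples, (cN S α x : ℝ) * ⟪β, x⟫ = 0 := by
    rw [← inner_expand S hα β]; exact h0
  have hall := (Finset.sum_eq_zero_iff_of_nonpos (term_nonpos S hα hβ hns)).1 hsum
  intro x hx
  obtain ⟨hxs, hx0⟩ := Finset.mem_filter.1 hx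
  have := hall x hxs
  have hc : (0:ℝ) < (cN S α x : ℝ) := by
    exact_mod_cast Nat.pos_of_ne_zero hx0
  rcases mul_eq_zero.1 this with h | h
  · exact absurd h (ne_of_gt hc)
  · exact h

/-- Reflecting a positive root in a simple root with negative inner product adds a
positive multiple of the simple root. -/
lemma sRefl_simple_neg {γ β : E} (hγ : γ ∈ S.pos) (hβ : β ∈ S.simples)
    (hneg : ⟪β, γ⟫ < 0) :
    ∃ q : ℕ, 1 ≤ q ∧ sRefl β γ = γ + (q : ℝ) • β := by
  obtain ⟨n, hn⟩ := pairInt S (simple_mem_R S hβ) (S.pos_subset hγ)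
  have hββ := root_inner_pos S (simple_mem_R S hβ)
  have hn_neg : (n:ℝ) < 0 := by
    rw [← hn]
    apply div_neg_of_neg_of_pos _ hββ
    rw [real_inner_comm]
    linarith
  have hnz : n < 0 := by exact_mod_cast hn_neg
  refine ⟨(-n).toNat, by omega, ?_⟩
  rw [sRefl_apply β γ (root_ne_zero S (simple_mem_R S hβ))]
  have h2 : 2 * ⟪β, γ⟫ / ⟪β, β⟫ = (n : ℝ) := by rw [real_inner_comm γ β]; exact hn
  rw [h2]
  have : ((-n).toNat : ℝ) = -(n:ℝ) := by
    have : ((-n).toNat : ℤ) = -n := Int.toNat_of_nonneg (by omega)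
    exact_mod_cast this
  rw [this, sub_eq_add_neg, ← neg_smul]

/-- `cN` of `γ + q • β`. -/
lemma cN_add_smul {γ β : E} (hγ : γ ∈ S.pos) (hβ : β ∈ S.simples) (q : ℕ)
    (hmem : γ + (q:ℝ) • β ∈ S.pos) :
    ∀ x ∈ S.simples, cN S (γ + (q:ℝ) • β) x = cN S γ x + (if x = β then q else 0) := by
  have hrep : γ + (q:ℝ) • β = ∑ x ∈ S.simples,
      (((cN S γ x : ℝ)) + if x = β then (q:ℝ) else 0) • x := by
    simp only [add_smul, Finset.sum_add_distrib, sum_delta S (q:ℝ) hβ]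
    rw [← cN_spec S hγ]
  intro x hx
  have hcast : ((cN S γ x + if x = β then q else 0 : ℕ) : ℝ)
      = ((cN S γ x : ℝ)) + if x = β then (q:ℝ) else 0 := by
    by_cases h : x = β <;> simp [h]
  have h3 := hcast.trans (coeff_unique S hmem hrep x hx)
  exact_mod_cast h3.symm

/-- The key exchange: reflecting in a simple root of `ΔP` produces a strictly larger
candidate with the same degree. -/
lemma refl_P_candidate {ΔP : Finset E} (hΔP : ΔP ⊆ S.simples) {γ β : E}
    (hγ : γ ∈ S.pos) (hγP : γ ∉ posP S ΔP) (hβ : β ∈ ΔP) (hneg : ⟪β, γ⟫ < 0) :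
    ∃ τ, τ ∈ S.pos ∧ τ ∉ posP S ΔP ∧ degOf S ΔP τ = degOf S ΔP γ ∧
      rootLE S γ τ ∧ τ ≠ γ := by
  have hβs : β ∈ S.simples := hΔP hβ
  obtain ⟨q, hq1, hqe⟩ := sRefl_simple_neg S hγ hβs hneg
  have hτR : sRefl β γ ∈ S.R :=
    S.refl_mem β (simple_mem_R S hβs) γ (S.pos_subset hγ)
  obtain ⟨β₀, hβ₀s, hβ₀P, hβ₀c⟩ : ∃ β₀ ∈ S.simples, β₀ ∉ ΔP ∧ cN S γ β₀ ≠ 0 := by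
    by_contra hc
    push_neg at hc
    exact hγP ((mem_posP_iff S hΔP hγ).2 (fun b hb hbP => by
      by_contra h0; exact h0 (hc b hb hbP)))
  have hβ₀β : β₀ ≠ β := fun h => hβ₀P (h ▸ hβ)
  set τ := γ + (q:ℝ) • β with hτ
  have hτR' : τ ∈ S.R := by rw [← hqe]; exact hτR
  have hrep : τ = ∑ x ∈ S.simples,
      (((cN S γ x : ℝ)) + if x = β then (q:ℝ) else 0) • x := by
    simp only [hτ, add_smul, Finset.sum_add_distrib, sum_delta S (q:ℝ) hβs]
    rw [← cN_spec S hγ]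
  have hτpos : τ ∈ S.pos := by
    apply pos_of_coeffs S hτR' hrep (fun x hx => by positivity) hβ₀s
    have : (0:ℝ) < (cN S γ β₀ : ℝ) := by exact_mod_cast Nat.pos_of_ne_zero hβ₀c
    rw [if_neg hβ₀β]
    linarith
  have hcN : ∀ x ∈ S.simples, cN S τ x = cN S γ x + (if x = β then q else 0) :=
    cN_add_smul S hγ hβs q hτpos
  refine ⟨τ, hτpos, ?_, ?_, ?_, ?_⟩
  · -- τ ∉ posP
    intro hmem
    have := (mem_posP_iff S hΔP hτpos).1 hmem β₀ hβ₀s hβ₀P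
    rw [hcN β₀ hβ₀s, if_neg hβ₀β] at this
    omega
  · -- degrees agree
    funext x
    unfold degOf
    by_cases hxP : x ∈ ΔP
    · simp [hxP]
    · rw [if_neg hxP, if_neg hxP]
      by_cases hxs : x ∈ S.simples
      · have he1 := corootCoeffs_eq S hτpos hxs
        have he2 := corootCoeffs_eq S hγ hxs
        have hττ : ⟪τ, τ⟫ = ⟪γ, γ⟫ := by
          have : ‖τ‖ = ‖γ‖ := by
            rw [← hqe]; exact (sRefl β).norm_map γ
          rw [real_inner_self_eq_norm_sq, real_inner_self_eq_norm_sq, this]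
        have hxβ : x ≠ β := fun h => hxP (h ▸ hβ)
        rw [hcN x hxs, if_neg hxβ, Nat.add_zero] at he1
        rw [hττ, ← he2] at he1
        exact_mod_cast he1
      · rw [(corootCoeffs_spec S hτpos).1 x hxs, (corootCoeffs_spec S hγ).1 x hxs]
  · -- rootLE
    refine ⟨fun x => if x = β then q else 0, ?_⟩
    have : τ - γ = (q:ℝ) • β := by rw [hτ]; abel
    rw [this]
    rw [Finset.sum_congr rfl (fun x _ => by
      rw [show ((if x = β then q else 0 : ℕ) : ℝ) = (if x = β then (q:ℝ) else 0) from by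
        by_cases h : x = β <;> simp [h]])]
    rw [sum_delta S (q:ℝ) hβs]
  · -- τ ≠ γ
    intro h
    rw [hτ] at h
    have : (q:ℝ) • β = 0 := by
      have := congrArg (fun z => z - γ) h
      simpa using this
    rcases smul_eq_zero.1 this with h' | h'
    · have : q = 0 := by exact_mod_cast h'
      omega
    · exact root_ne_zero S (simple_mem_R S hβs) h'

/-- P-saturation: every simple root of `ΔP` not in the support of a maximal root is
orthogonal to the whole support. -/
def PSat (ΔP : Finset E) (γ : E) : Prop :=
  ∀ β ∈ ΔP, β ∉ suppN S γ → ∀ x ∈ suppN S γ, ⟪β, x⟫ = 0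

lemma maxRoot_PSat {ΔP : Finset E} (hΔP : ΔP ⊆ S.simples) {d : E → ℕ} {γ : E}
    (h : IsMaxRoot S ΔP d γ) : PSat S ΔP γ := by
  obtain ⟨hpos, hnP, hdle, hmax⟩ := h
  intro β hβ hβs
  have hβsim : β ∈ S.simples := hΔP hβ
  have hnn : ¬ ⟪β, γ⟫ < 0 := by
    intro hneg
    obtain ⟨τ, hτpos, hτnP, hτdeg, hτge, hτne⟩ :=
      refl_P_candidate S hΔP hpos hnP hβ hneg
    exact hτne (hmax τ hτpos hτnP (hτdeg ▸ hdle) hτge)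
  have h0 : ⟪β, γ⟫ = 0 :=
    le_antisymm (inner_nonpos_of_not_supp S hpos hβsim hβs) (not_lt.1 hnn)
  exact orth_of_inner_zero S hpos hβsim hβs h0

/-- Height of a positive root. -/
noncomputable def ht (γ : E) : ℕ := ∑ β ∈ S.simples, cN S γ β

lemma suppN_nonempty {γ : E} (hγ : γ ∈ S.pos) : (suppN S γ).Nonempty := by
  by_contra h
  rw [Finset.not_nonempty_iff_eq_empty] at h
  have h0 : ∀ β ∈ S.simples, cN S γ β = 0 := by
    intro β hβ
    by_contra h0
    have : β ∈ suppN S γ := Finset.mem_filter.2 ⟨hβ, h0⟩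
    simp [h] at this
  have : γ = 0 := by
    rw [cN_spec S hγ]
    apply Finset.sum_eq_zero
    intro x hx
    rw [h0 x hx]
    simp
  exact S.zero_not_mem (this ▸ S.pos_subset hγ)

lemma exists_simple_pos_inner {γ : E} (hγ : γ ∈ S.pos) :
    ∃ β ∈ suppN S γ, 0 < ⟪β, γ⟫ := by
  have hγγ := root_inner_pos S (S.pos_subset hγ)
  have hexp := inner_expand S hγ γ
  by_contra h
  push_neg at h
  have hall : ∀ x ∈ S.simples, (cN S γ x : ℝ) * ⟪γ, x⟫ ≤ 0 := by
    intro x hx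
    by_cases h0 : cN S γ x = 0
    · simp [h0]
    · have hxs : x ∈ suppN S γ := Finset.mem_filter.2 ⟨hx, h0⟩
      have h1 := h x hxs
      have h1' : ⟪γ, x⟫ ≤ 0 := by rwa [real_inner_comm]
      have h2 : (0:ℝ) ≤ (cN S γ x : ℝ) := by positivity
      nlinarith
  have : ⟪γ, γ⟫ ≤ 0 := hexp ▸ Finset.sum_nonpos hall
  linarith

/-- Subtracting a suitable simple root from a positive root. -/
lemma sub_simple {γ β : E} (hγ : γ ∈ S.pos) (hβ : β ∈ suppN S γ)
    (hpos : 0 < ⟪β, γ⟫) (hne : γ ≠ β) :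
    ∃ μ, μ ∈ S.pos ∧ μ + β = γ ∧
      (∀ x ∈ S.simples, cN S γ x = cN S μ x + (if x = β then 1 else 0)) := by
  obtain ⟨hβs, hβc⟩ := Finset.mem_filter.1 hβ
  have h1 : 1 ≤ cN S γ β := Nat.one_le_iff_ne_zero.2 hβc
  have hγR := S.pos_subset hγ
  have hβR := simple_mem_R S hβs
  have hinn : ⟪γ, -β⟫ < 0 := by
    rw [inner_neg_right, real_inner_comm]
    linarith
  have hne0 : γ + -β ≠ 0 := by
    intro h0
    rw [← sub_eq_add_neg] at h0
    exact hne (sub_eq_zero.1 h0)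
  have hμR : γ + -β ∈ S.R := add_root S hγR (S.neg_mem _ hβR) hinn hne0
  have hrep : γ + -β = ∑ x ∈ S.simples,
      (((cN S γ x : ℝ)) - if x = β then 1 else 0) • x := by
    simp only [sub_smul, Finset.sum_sub_distrib, sum_delta S 1 hβs, one_smul]
    rw [← cN_spec S hγ, sub_eq_add_neg]
  have hnn : ∀ x ∈ S.simples, 0 ≤ ((cN S γ x : ℝ)) - if x = β then 1 else 0 := by
    intro x hx
    by_cases h : x = β
    · rw [h, if_pos rfl]
      have : (1:ℝ) ≤ (cN S γ β : ℝ) := by exact_mod_cast h1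
      linarith
    · rw [if_neg h, sub_zero]; positivity
  obtain ⟨x₀, hx₀s, hx₀p⟩ : ∃ x₀ ∈ S.simples, 0 < ((cN S γ x₀ : ℝ)) - if x₀ = β then 1 else 0 := by
    by_contra hc
    push_neg at hc
    have hz : γ + -β = 0 := by
      rw [hrep]
      apply Finset.sum_eq_zero
      intro x hx
      have h4 : ((cN S γ x : ℝ)) - (if x = β then 1 else 0) = 0 :=
        le_antisymm (hc x hx) (hnn x hx)
      rw [h4, zero_smul]
    exact S.zero_not_mem (hz ▸ hμR)
  have hμpos : γ + -β ∈ S.pos := pos_of_coeffs S hμR hrep hnn hx₀s hx₀p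
  refine ⟨γ + -β, hμpos, by abel, ?_⟩
  intro x hx
  have hval := coeff_unique S hμpos hrep x hx
  by_cases h : x = β
  · rw [h, if_pos rfl] at hval ⊢
    rw [h] at hx
    have : (cN S (γ + -β) β : ℝ) = (cN S γ β : ℝ) - 1 := hval.symm
    have h2 : (cN S (γ + -β) β : ℝ) + 1 = (cN S γ β : ℝ) := by linarith
    exact_mod_cast h2.symm
  · rw [if_neg h] at hval ⊢
    rw [sub_zero] at hval
    have : cN S (γ + -β) x = cN S γ x := by exact_mod_cast hval.symm
    omega

/-- Separation: the support of a root cannot be split into two orthogonal parts. -/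
lemma sep2 : ∀ N γ, γ ∈ S.pos → ht S γ = N → ∀ C1 C2 : Finset E,
    (∀ x ∈ C1, ∀ y ∈ C2, ⟪x, y⟫ = 0) → suppN S γ ⊆ C1 ∪ C2 →
    suppN S γ ⊆ C1 ∨ suppN S γ ⊆ C2 := by
  intro N
  induction N using Nat.strong_induction_on with
  | _ N IH =>
    intro γ hγ hN C1 C2 horth hsub
    obtain ⟨β, hβ, hβi⟩ := exists_simple_pos_inner S hγ
    obtain ⟨hβs, hβc⟩ := Finset.mem_filter.1 hβ
    by_cases hne : γ = β
    · -- support is a singleton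
      have : suppN S γ ⊆ {β} := by
        intro x hx
        obtain ⟨hxs, hxc⟩ := Finset.mem_filter.1 hx
        by_contra hxβ
        -- γ = β simple: coefficients are δ_β
        have hrep : γ = ∑ x ∈ S.simples, (if x = β then (1:ℝ) else 0) • x := by
          rw [sum_delta S 1 hβs, one_smul, hne]
        have := coeff_unique S hγ hrep x hxs
        rw [if_neg (by simpa using hxβ)] at this
        exact hxc (by exact_mod_cast this.symm)
      rcases Finset.mem_union.1 (hsub hβ) with h | h
      · exact Or.inl (this.trans (Finset.singleton_subset_iff.2 h))
      · exact Or.inr (this.trans (Finset.singleton_subset_iff.2 h))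
    · obtain ⟨μ, hμpos, hμβ, hcc⟩ := sub_simple S hγ hβ hβi hne
      have hsuppμ : suppN S μ ⊆ suppN S γ := by
        intro x hx
        obtain ⟨hxs, hxc⟩ := Finset.mem_filter.1 hx
        refine Finset.mem_filter.2 ⟨hxs, ?_⟩
        have := hcc x hxs
        omega
      have hsuppγ : suppN S γ ⊆ suppN S μ ∪ {β} := by
        intro x hx
        obtain ⟨hxs, hxc⟩ := Finset.mem_filter.1 hx
        rcases eq_or_ne x β with h | h
        · exact Finset.mem_union_right _ (by simp [h])
        · apply Finset.mem_union_left
          refine Finset.mem_filter.2 ⟨hxs, ?_⟩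
          have := hcc x hxs
          rw [if_neg h] at this
          omega
      have hhtμ : ht S μ < N := by
        rw [← hN]
        unfold ht
        have h1 : ∑ x ∈ S.simples, cN S γ x
            = ∑ x ∈ S.simples, (cN S μ x + if x = β then 1 else 0) :=
          Finset.sum_congr rfl hcc
        rw [h1, Finset.sum_add_distrib, Finset.sum_ite_eq' S.simples β (fun _ => 1),
          if_pos hβs]
        omega
      have hμN := IH (ht S μ) hhtμ μ hμpos rfl C1 C2 horth (hsuppμ.trans hsub)
      -- symmetric treatment of the two cases
      have main : ∀ Ca Cb : Finset E, (∀ x ∈ Ca, ∀ y ∈ Cb, ⟪x, y⟫ = 0) →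
          suppN S γ ⊆ Ca ∪ Cb → suppN S μ ⊆ Ca → suppN S γ ⊆ Ca ∨ suppN S γ ⊆ Cb := by
        intro Ca Cb hab hsub' hμa
        rcases Finset.mem_union.1 (hsub' hβ) with hβa | hβb
        · left
          intro x hx
          rcases Finset.mem_union.1 (hsuppγ hx) with h | h
          · exact hμa h
          · rwa [Finset.mem_singleton.1 h]
        · -- β ∈ Cb : contradiction
          exfalso
          have hβa : β ∉ Ca := by
            intro h
            have := hab β h β hβb
            have := root_inner_pos S (simple_mem_R S hβs)
            linarith
          have hβμ : β ∉ suppN S μ := fun h => hβa (hμa h)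
          have hinnβμ : ⟪β, μ⟫ = 0 := by
            rw [inner_expand S hμpos β]
            apply Finset.sum_eq_zero
            intro x hx
            by_cases h0 : cN S μ x = 0
            · simp [h0]
            · have hxμ : x ∈ suppN S μ := Finset.mem_filter.2 ⟨hx, h0⟩
              have := hab x (hμa hxμ) β hβb
              rw [real_inner_comm] at this
              rw [this, mul_zero]
          have hinnβγ : ⟪β, γ⟫ = ⟪β, β⟫ := by
            rw [← hμβ, inner_add_right, hinnβμ, zero_add]
          -- sRefl β γ = μ - β ∈ R has mixed signs
          have hτR : sRefl β γ ∈ S.R :=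
            S.refl_mem β (simple_mem_R S hβs) γ (S.pos_subset hγ)
          have hττ : sRefl β γ = μ + -β := by
            rw [sRefl_apply β γ (root_ne_zero S (simple_mem_R S hβs)), hinnβγ]
            have hββ := root_inner_pos S (simple_mem_R S hβs)
            rw [show 2 * ⟪β,β⟫ / ⟪β,β⟫ = (2:ℝ) from by field_simp]
            rw [← hμβ]
            have h5 : (2:ℝ) • β = β + β := two_smul ℝ β
            rw [h5]
            module
          have hrepτ : μ + -β = ∑ x ∈ S.simples,
              (((cN S μ x : ℝ)) - if x = β then 1 else 0) • x := by
            simp only [sub_smul, Finset.sum_sub_distrib, sum_delta S 1 hβs, one_smul]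
            rw [← cN_spec S hμpos, sub_eq_add_neg]
          obtain ⟨x₀, hx₀⟩ := suppN_nonempty S hμpos
          obtain ⟨hx₀s, hx₀c⟩ := Finset.mem_filter.1 hx₀
          have hx₀β : x₀ ≠ β := fun h => hβμ (h ▸ hx₀)
          apply not_mixed S (hττ ▸ hτR) hrepτ hx₀s hβs
          · rw [if_neg hx₀β, sub_zero]
            exact_mod_cast Nat.pos_of_ne_zero hx₀c
          · rw [if_pos rfl]
            have : cN S μ β = 0 := by
              by_contra h
              exact hβμ (Finset.mem_filter.2 ⟨hβs, h⟩)
            rw [this]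
            norm_num
      rcases hμN with h | h
      · exact main C1 C2 horth hsub h
      · rcases main C2 C1 (fun x hx y hy => by rw [real_inner_comm]; exact horth y hy x hx)
          (by rwa [Finset.union_comm]) h with h' | h'
        · exact Or.inr h'
        · exact Or.inl h'

/-- Multi-part separation. -/
lemma sepk {m : ℕ} (A : Fin m → Finset E)
    (horth : ∀ i j, i ≠ j → ∀ x ∈ A i, ∀ y ∈ A j, ⟪x, y⟫ = 0)
    {γ : E} (hγ : γ ∈ S.pos) (hsub : ∀ x ∈ suppN S γ, ∃ i, x ∈ A i) :
    ∃ i, suppN S γ ⊆ A i := by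
  induction m with
  | zero =>
    obtain ⟨x, hx⟩ := suppN_nonempty S hγ
    obtain ⟨i, -⟩ := hsub x hx
    exact absurd i.2 (by omega)
  | succ m IH =>
    set C2 : Finset E := Finset.univ.biUnion (fun i : Fin m => A i.succ) with hC2
    have h2 := sep2 S (ht S γ) γ hγ rfl (A 0) C2
      (by
        intro x hx y hy
        rw [hC2, Finset.mem_biUnion] at hy
        obtain ⟨i, -, hy⟩ := hy
        exact horth 0 i.succ (Fin.succ_ne_zero i).symm x hx y hy)
      (by
        intro x hx
        obtain ⟨i, hi⟩ := hsub x hx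
        rcases Fin.eq_zero_or_eq_succ i with h | ⟨j, h⟩
        · exact Finset.mem_union_left _ (h ▸ hi)
        · exact Finset.mem_union_right _
            (Finset.mem_biUnion.2 ⟨j, Finset.mem_univ _, h ▸ hi⟩))
    rcases h2 with h | h
    · exact ⟨0, h⟩
    · obtain ⟨i, hi⟩ := IH (fun i : Fin m => A i.succ)
        (fun i j hij => horth i.succ j.succ (fun he => hij (Fin.succ_injective m he)))
        (fun x hx => Finset.mem_biUnion.1 (h hx) |>.imp (fun i h' => h'.2))
      exact ⟨i.succ, hi⟩

lemma greedy_sum {ΔP : Finset E} : ∀ {l : List E} {d : E → ℕ},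
    IsGreedy S ΔP l d → ∀ β, d β = (l.map (fun γ => degOf S ΔP γ β)).sum := by
  intro l
  induction l with
  | nil => intro d h β; rw [h]; rfl
  | cons α t IH =>
    intro d h β
    obtain ⟨hm, ht⟩ := h
    have hle : degOf S ΔP α β ≤ d β := hm.2.2.1 β
    have := IH ht β
    simp only [List.map_cons, List.sum_cons]
    have hsub : (d - degOf S ΔP α) β = d β - degOf S ΔP α β := rfl
    rw [hsub] at this
    omega

lemma greedy_stages {ΔP : Finset E} : ∀ {l : List E} {d : E → ℕ},
    IsGreedy S ΔP l d → ∀ γ ∈ l, ∃ f, (∀ β, f β ≤ d β) ∧ IsMaxRoot S ΔP f γ := by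
  intro l
  induction l with
  | nil => intro d _ γ h; exact absurd h List.not_mem_nil
  | cons α t IH =>
    intro d h γ hγ
    obtain ⟨hm, ht⟩ := h
    rcases List.mem_cons.1 hγ with h | h
    · exact ⟨d, fun β => le_refl _, h ▸ hm⟩
    · obtain ⟨f, hf1, hf2⟩ := IH ht γ h
      refine ⟨f, fun β => ?_, hf2⟩
      have := hf1 β
      have hsub : (d - degOf S ΔP α) β = d β - degOf S ΔP α β := rfl
      rw [hsub] at this
      omega

lemma mem_extSupp {β : E} : ∀ {l : List E},
    β ∈ extSuppOf S l ↔ ∃ γ ∈ l, β ∈ suppR S γ := by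
  intro l
  induction l with
  | nil => simp [extSuppOf]
  | cons α t IH =>
    unfold extSuppOf at IH ⊢
    simp only [List.foldr_cons, Finset.mem_union, IH, List.mem_cons]
    constructor
    · rintro (h | ⟨γ, hγ, h⟩)
      · exact ⟨α, Or.inl rfl, h⟩
      · exact ⟨γ, Or.inr hγ, h⟩
    · rintro ⟨γ, h | h, hh⟩
      · exact Or.inl (h ▸ hh)
      · exact Or.inr ⟨γ, h, hh⟩

lemma suppR_subset_simples (α : E) : suppR S α ⊆ S.simples := Finset.filter_subset _ _

/-- Strong orthogonality of simple roots implies orthogonality. -/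
lemma orth_of_SO {x y : E} (hx : x ∈ S.simples) (hy : y ∈ S.simples)
    (h : StronglyOrthogonal S x y) : ⟪x, y⟫ = 0 := by
  obtain ⟨h1, h2, h3, h4⟩ := h
  by_contra h0
  rcases lt_or_gt_of_ne h0 with hlt | hgt
  · exact h1 (add_root S (simple_mem_R S hx) (simple_mem_R S hy) hlt h3)
  · have : ⟪x, -y⟫ < 0 := by rw [inner_neg_right]; linarith
    have h5 : x + -y ≠ 0 := by rwa [← sub_eq_add_neg]
    have := add_root S (simple_mem_R S hx) (S.neg_mem _ (simple_mem_R S hy)) this h5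
    rw [← sub_eq_add_neg] at this
    exact h2 this

/-- Confinement: a root of bounded degree has its support within one block. -/
lemma confine {ΔP : Finset E} (hΔP : ΔP ⊆ S.simples) {k : ℕ} (A : Fin k → Finset E)
    (horthA : ∀ i j, i ≠ j → ∀ x ∈ A i, ∀ y ∈ A j, ⟪x, y⟫ = 0)
    (hsat : ∀ p ∈ ΔP, ∀ i, p ∉ A i → ∀ x ∈ A i, ⟪p, x⟫ = 0)
    (f : E → ℕ) (hf : ∀ β, f β ≠ 0 → (∃ i, β ∈ A i) ∧ β ∉ ΔP)
    {γ : E} (hγ : γ ∈ S.pos) (hγP : γ ∉ posP S ΔP) (hdle : degOf S ΔP γ ≤ f) :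
    ∃ i₀, suppN S γ ⊆ A i₀ := by
  classical
  -- key: every support element outside all blocks lies in ΔP
  have hkey : ∀ x ∈ suppN S γ, (¬ ∃ i, x ∈ A i) → x ∈ ΔP := by
    intro x hx hnx
    obtain ⟨hxs, hxc⟩ := Finset.mem_filter.1 hx
    by_contra hxP
    have hdnz : degOf S ΔP γ x ≠ 0 := (degOf_ne_zero_iff S hγ x).2 ⟨hxs, hxP, hxc⟩
    have : f x ≠ 0 := fun h0 => hdnz (Nat.le_zero.1 (h0 ▸ hdle x))
    exact hnx ⟨(hf x this).1.choose, (hf x this).1.choose_spec⟩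
  set Blast : Finset E := (suppN S γ).filter (fun x => ¬ ∃ i, x ∈ A i) with hBl
  set B : Fin (k+1) → Finset E := fun i =>
    if h : (i : ℕ) < k then A ⟨i, h⟩ else Blast with hB
  have hBlast_P : ∀ x ∈ Blast, x ∈ ΔP ∧ ¬ ∃ i, x ∈ A i := by
    intro x hx
    obtain ⟨hx1, hx2⟩ := Finset.mem_filter.1 hx
    exact ⟨hkey x hx1 hx2, hx2⟩
  have hBlt : ∀ (i : Fin (k+1)) (h : (i : ℕ) < k), B i = A ⟨i, h⟩ := by
    intro i h; rw [hB]; exact dif_pos h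
  have hBge : ∀ (i : Fin (k+1)), ¬ ((i : ℕ) < k) → B i = Blast := by
    intro i h; rw [hB]; exact dif_neg h
  have horthB : ∀ i j, i ≠ j → ∀ x ∈ B i, ∀ y ∈ B j, ⟪x, y⟫ = 0 := by
    intro i j hij x hx y hy
    by_cases hi : (i : ℕ) < k <;> by_cases hj : (j : ℕ) < k
    · rw [hBlt i hi] at hx
      rw [hBlt j hj] at hy
      exact horthA ⟨i, hi⟩ ⟨j, hj⟩ (fun h => hij (Fin.ext (by have h2 := congrArg Fin.val h; simpa using h2))) x hx y hy
    · rw [hBlt i hi] at hx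
      rw [hBge j hj] at hy
      obtain ⟨hyP, hyn⟩ := hBlast_P y hy
      have := hsat y hyP ⟨i, hi⟩ (fun h => hyn ⟨⟨i, hi⟩, h⟩) x hx
      rw [real_inner_comm] at this
      exact this
    · rw [hBge i hi] at hx
      rw [hBlt j hj] at hy
      obtain ⟨hxP, hxn⟩ := hBlast_P x hx
      exact hsat x hxP ⟨j, hj⟩ (fun h => hxn ⟨⟨j, hj⟩, h⟩) y hy
    · exfalso
      apply hij
      have hi' : (i : ℕ) = k := by omega
      have hj' : (j : ℕ) = k := by omega
      exact Fin.ext (hi'.trans hj'.symm)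
  have hcov : ∀ x ∈ suppN S γ, ∃ i, x ∈ B i := by
    intro x hx
    by_cases h : ∃ i, x ∈ A i
    · obtain ⟨i, hi⟩ := h
      refine ⟨⟨(i : ℕ), by omega⟩, ?_⟩
      rw [hBlt ⟨(i : ℕ), by omega⟩ i.2]
      exact hi
    · refine ⟨⟨k, by omega⟩, ?_⟩
      rw [hBge ⟨k, by omega⟩ (by simp)]
      exact Finset.mem_filter.2 ⟨hx, h⟩
  obtain ⟨i, hi⟩ := sepk S B horthB hγ hcov
  by_cases hik : (i : ℕ) < k
  · refine ⟨⟨i, hik⟩, ?_⟩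
    rw [hBlt i hik] at hi
    exact hi
  · exfalso
    rw [hBge i hik] at hi
    apply hγP
    rw [mem_posP_iff S hΔP hγ]
    intro β hβ hβP
    by_contra h0
    have : β ∈ suppN S γ := Finset.mem_filter.2 ⟨hβ, h0⟩
    exact hβP (hBlast_P β (hi this)).1

lemma deg_nonzero {ΔP : Finset E} (hΔP : ΔP ⊆ S.simples) {γ : E}
    (hγ : γ ∈ S.pos) (hγP : γ ∉ posP S ΔP) : ∃ β, degOf S ΔP γ β ≠ 0 := by
  by_contra h
  push_neg at h
  apply hγP
  rw [mem_posP_iff S hΔP hγ]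
  intro β hβ hβP
  by_contra h0
  exact (degOf_ne_zero_iff S hγ β).2 ⟨hβ, hβP, h0⟩ (h β)

lemma entry_facts {ΔP : Finset E} (hΔP : ΔP ⊆ S.simples) {l : List E} {f : E → ℕ}
    (hgr : IsGreedy S ΔP l f) {γ : E} (hγ : γ ∈ l) :
    γ ∈ S.pos ∧ γ ∉ posP S ΔP ∧ PSat S ΔP γ ∧ suppR S γ = suppN S γ := by
  obtain ⟨f', -, hmax⟩ := greedy_stages S hgr γ hγ
  exact ⟨hmax.1, hmax.2.1, maxRoot_PSat S hΔP hmax, suppR_eq_suppN S hmax.1⟩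

/-- Main context facts, packaged. -/
structure Ctx (ΔP : Finset E) {k : ℕ} (d : Fin k → (E → ℕ)) (A : Fin k → Finset E) : Prop where
  horth : ∀ i j, i ≠ j → ∀ x ∈ A i, ∀ y ∈ A j, ⟪x, y⟫ = 0
  hsat : ∀ p ∈ ΔP, ∀ i, p ∉ A i → ∀ x ∈ A i, ⟪p, x⟫ = 0
  hsupp : ∀ i β, d i β ≠ 0 → β ∈ A i ∧ β ∉ ΔP
  hA : ∀ i, A i ⊆ S.simples

lemma ctx_of_data {ΔP : Finset E} (hΔP : ΔP ⊆ S.simples) {k : ℕ}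
    (d : Fin k → (E → ℕ)) (g : Fin k → List E)
    (hg : ∀ i, IsGreedy S ΔP (g i) (d i))
    (hdisj : ∀ i j, i ≠ j → TotallyDisjoint S (extSuppOf S (g i)) (extSuppOf S (g j))) :
    Ctx S ΔP d (fun i => extSuppOf S (g i)) := by
  have hA : ∀ i, extSuppOf S (g i) ⊆ S.simples := by
    intro i x hx
    obtain ⟨γ, hγ, hs⟩ := (mem_extSupp S).1 hx
    exact suppR_subset_simples S γ hs
  refine ⟨?_, ?_, ?_, hA⟩
  · intro i j hij x hx y hy
    exact orth_of_SO S (hA i hx) (hA j hy) (hdisj i j hij x hx y hy)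
  · intro p hp i hpA x hx
    obtain ⟨γ, hγ, hs⟩ := (mem_extSupp S).1 hx
    obtain ⟨hγpos, -, hPSat, hsupp⟩ := entry_facts S hΔP (hg i) hγ
    have hpn : p ∉ suppN S γ := by
      intro hmem
      exact hpA ((mem_extSupp S).2 ⟨γ, hγ, hsupp ▸ hmem⟩)
    exact hPSat p hp hpn x (hsupp ▸ hs)
  · intro i β hβ
    rw [greedy_sum S (hg i) β] at hβ
    have : ∃ γ ∈ g i, degOf S ΔP γ β ≠ 0 := by
      by_contra hc
      push_neg at hc
      apply hβ
      apply List.sum_eq_zero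
      intro x hx
      obtain ⟨γ, hγ, rfl⟩ := List.mem_map.1 hx
      exact hc γ hγ
    obtain ⟨γ, hγ, hdnz⟩ := this
    obtain ⟨hγpos, -, -, hsupp⟩ := entry_facts S hΔP (hg i) hγ
    obtain ⟨hβs, hβP, hβc⟩ := (degOf_ne_zero_iff S hγpos β).1 hdnz
    refine ⟨(mem_extSupp S).2 ⟨γ, hγ, ?_⟩, hβP⟩
    rw [hsupp]
    exact Finset.mem_filter.2 ⟨hβs, hβc⟩

lemma blocks_disjoint {ΔP : Finset E} {k : ℕ} {d : Fin k → (E → ℕ)}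
    {A : Fin k → Finset E} (hc : Ctx S ΔP d A) {i j : Fin k} {x : E}
    (hi : x ∈ A i) (hj : x ∈ A j) : i = j := by
  by_contra hij
  have := hc.horth i j hij x hi x hj
  have h2 := root_inner_pos S (simple_mem_R S (hc.hA i hi))
  linarith

/-- The class of a root relative to a block. -/
def cls (ΔP : Finset E) {k : ℕ} (A : Fin k → Finset E) (i : Fin k) (γ : E) : Prop :=
  γ ∈ S.pos ∧ (∃ β, degOf S ΔP γ β ≠ 0) ∧ ∀ β, degOf S ΔP γ β ≠ 0 → β ∈ A i

lemma cls_unique {ΔP : Finset E} {k : ℕ} {d : Fin k → (E → ℕ)}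
    {A : Fin k → Finset E} (hc : Ctx S ΔP d A) {i j : Fin k} {γ : E}
    (hi : cls S ΔP A i γ) (hj : cls S ΔP A j γ) : i = j := by
  obtain ⟨β, hβ⟩ := hi.2.1
  exact blocks_disjoint S hc (hi.2.2 β hβ) (hj.2.2 β hβ)

/-- Every root of a greedy decomposition of a degree bounded by `d i` is in class `i`. -/
lemma entries_cls {ΔP : Finset E} (hΔP : ΔP ⊆ S.simples) {k : ℕ}
    {d : Fin k → (E → ℕ)} {A : Fin k → Finset E} (hc : Ctx S ΔP d A) (i : Fin k) :
    ∀ (m : List E) (f : E → ℕ), (∀ β, f β ≤ d i β) → IsGreedy S ΔP m f →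
      ∀ γ ∈ m, cls S ΔP A i γ := by
  intro m
  induction m with
  | nil => intro f _ _ γ hγ; exact absurd hγ List.not_mem_nil
  | cons α t IH =>
    intro f hle hgr γ hγ
    obtain ⟨hmax, htail⟩ := hgr
    have hstep : cls S ΔP A i α := by
      obtain ⟨hαpos, hαnP, hαle, -⟩ := hmax
      obtain ⟨i', hi'⟩ := confine S hΔP A hc.horth hc.hsat f
        (fun β hβ => by
          have hd : d i β ≠ 0 := fun h0 => hβ (Nat.le_zero.1 (h0 ▸ hle β))
          exact ⟨⟨i, (hc.hsupp i β hd).1⟩, (hc.hsupp i β hd).2⟩)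
        hαpos hαnP hαle
      have hcls' : ∀ β, degOf S ΔP α β ≠ 0 → β ∈ A i' := by
        intro β hβ
        obtain ⟨hβs, -, hβc⟩ := (degOf_ne_zero_iff S hαpos β).1 hβ
        exact hi' (Finset.mem_filter.2 ⟨hβs, hβc⟩)
      obtain ⟨β₀, hβ₀⟩ := deg_nonzero S hΔP hαpos hαnP
      have hfd : f β₀ ≠ 0 := fun h0 => hβ₀ (Nat.le_zero.1 (h0 ▸ hαle β₀))
      have hd : d i β₀ ≠ 0 := fun h0 => hfd (Nat.le_zero.1 (h0 ▸ hle β₀))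
      have : i' = i := blocks_disjoint S hc (hcls' β₀ hβ₀) (hc.hsupp i β₀ hd).1
      exact ⟨hαpos, ⟨β₀, hβ₀⟩, this ▸ hcls'⟩
    rcases List.mem_cons.1 hγ with h | h
    · exact h ▸ hstep
    · refine IH (f - degOf S ΔP α) (fun β => ?_) htail γ h
      have : (f - degOf S ΔP α) β = f β - degOf S ΔP α β := rfl
      rw [this]
      have := hle β
      omega

lemma max_cls {ΔP : Finset E} (hΔP : ΔP ⊆ S.simples) {k : ℕ}
    {d : Fin k → (E → ℕ)} {A : Fin k → Finset E} (hc : Ctx S ΔP d A)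
    (e : Fin k → (E → ℕ)) (he : ∀ i β, e i β ≤ d i β) {α : E}
    (hmax : IsMaxRoot S ΔP (fun β => ∑ i, e i β) α) :
    ∃ i₀, cls S ΔP A i₀ α ∧ (∀ β, degOf S ΔP α β ≤ e i₀ β) ∧
      IsMaxRoot S ΔP (e i₀) α := by
  obtain ⟨hαpos, hαnP, hαle, hαm⟩ := hmax
  obtain ⟨i₀, hi₀⟩ := confine S hΔP A hc.horth hc.hsat (fun β => ∑ i, e i β)
    (fun β hβ => by
      have : ∃ i, e i β ≠ 0 := by
        by_contra hcon
        push_neg at hcon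
        exact hβ (Finset.sum_eq_zero (fun i _ => hcon i))
      obtain ⟨i, hi⟩ := this
      have hd : d i β ≠ 0 := fun h0 => hi (Nat.le_zero.1 (h0 ▸ he i β))
      exact ⟨⟨i, (hc.hsupp i β hd).1⟩, (hc.hsupp i β hd).2⟩)
    hαpos hαnP hαle
  have hmemA : ∀ β, degOf S ΔP α β ≠ 0 → β ∈ A i₀ := by
    intro β hβ
    obtain ⟨hβs, -, hβc⟩ := (degOf_ne_zero_iff S hαpos β).1 hβ
    exact hi₀ (Finset.mem_filter.2 ⟨hβs, hβc⟩)
  have hle₀ : ∀ β, degOf S ΔP α β ≤ e i₀ β := by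
    intro β
    by_cases h0 : degOf S ΔP α β = 0
    · rw [h0]; exact Nat.zero_le _
    · have hβA := hmemA β h0
      have hzero : ∀ j ∈ (Finset.univ : Finset (Fin k)), j ≠ i₀ → e j β = 0 := by
        intro j _ hj
        by_contra hej
        have hd : d j β ≠ 0 := fun hz => hej (Nat.le_zero.1 (hz ▸ he j β))
        exact hj (blocks_disjoint S hc (hc.hsupp j β hd).1 hβA)
      have hsum : ∑ i, e i β = e i₀ β :=
        Finset.sum_eq_single_of_mem i₀ (Finset.mem_univ _) hzero
      have h2 : degOf S ΔP α β ≤ ∑ i, e i β := hαle β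
      rw [hsum] at h2
      exact h2
  obtain ⟨β₀, hβ₀⟩ := deg_nonzero S hΔP hαpos hαnP
  refine ⟨i₀, ⟨hαpos, ⟨β₀, hβ₀⟩, hmemA⟩, hle₀, hαpos, hαnP, hle₀, ?_⟩
  intro α' h1 h2 h3 h4
  refine hαm α' h1 h2 (fun β => ?_) h4
  exact le_trans (h3 β) (Finset.single_le_sum (f := fun i => e i β)
    (fun i _ => Nat.zero_le _) (Finset.mem_univ i₀))

/-- The splitting lemma: the class filters of a greedy decomposition of a sum are
greedy decompositions of the summands, and they partition the list. -/
lemma ST {ΔP : Finset E} (hΔP : ΔP ⊆ S.simples) {k : ℕ}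
    {d : Fin k → (E → ℕ)} {A : Fin k → Finset E} (hc : Ctx S ΔP d A) :
    ∀ (l : List E) (e : Fin k → (E → ℕ)), (∀ i β, e i β ≤ d i β) →
      IsGreedy S ΔP l (fun β => ∑ i, e i β) →
      (∀ i, IsGreedy S ΔP (l.filter (fun γ => decide (cls S ΔP A i γ))) (e i)) ∧
        l.length = ∑ i, (l.filter (fun γ => decide (cls S ΔP A i γ))).length := by
  intro l
  induction l with
  | nil =>
    intro e he hl
    have h0 : (fun β => ∑ i, e i β) = (fun _ => 0) := hl
    have hz : ∀ i β, e i β = 0 := by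
      intro i β
      have := congrFun h0 β
      exact (Finset.sum_eq_zero_iff.1 this) i (Finset.mem_univ i)
    constructor
    · intro i
      show IsGreedy S ΔP [] (e i)
      show e i = fun _ => 0
      funext β
      exact hz i β
    · simp
  | cons α t IH =>
    intro e he hl
    obtain ⟨hmax, htail⟩ := hl
    obtain ⟨i₀, hcls₀, hle₀, hmax₀⟩ := max_cls S hΔP hc e he hmax
    set e' : Fin k → (E → ℕ) :=
      fun i => if i = i₀ then e i₀ - degOf S ΔP α else e i with he'def
    have he'₀ : e' i₀ = e i₀ - degOf S ΔP α := by rw [he'def]; exact if_pos rfl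
    have he'ne : ∀ i, i ≠ i₀ → e' i = e i := by
      intro i hi; rw [he'def]; exact if_neg hi
    have he' : ∀ i β, e' i β ≤ d i β := by
      intro i β
      by_cases h : i = i₀
      · rw [h, he'₀]
        have h1 : (e i₀ - degOf S ΔP α) β = e i₀ β - degOf S ΔP α β := rfl
        rw [h1]
        have := he i₀ β
        omega
      · rw [he'ne i h]; exact he i β
    have hsum : ∀ β, ∑ i, e' i β = (∑ i, e i β) - degOf S ΔP α β := by
      intro β
      have key : (∑ i, e' i β) + degOf S ΔP α β = ∑ i, e i β := by
        have h1 : ∀ i ∈ (Finset.univ : Finset (Fin k)),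
            e' i β + (if i = i₀ then degOf S ΔP α β else 0) = e i β := by
          intro i _
          by_cases h : i = i₀
          · rw [h, he'₀, if_pos rfl]
            have h1 : (e i₀ - degOf S ΔP α) β = e i₀ β - degOf S ΔP α β := rfl
            rw [h1]
            have := hle₀ β
            omega
          · rw [he'ne i h, if_neg h, Nat.add_zero]
        calc (∑ i, e' i β) + degOf S ΔP α β
            = (∑ i, e' i β) + ∑ i, (if i = i₀ then degOf S ΔP α β else 0) := by
              rw [Finset.sum_ite_eq' Finset.univ i₀ (fun _ => degOf S ΔP α β),
                if_pos (Finset.mem_univ _)]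
          _ = ∑ i, (e' i β + if i = i₀ then degOf S ΔP α β else 0) := by
              rw [Finset.sum_add_distrib]
          _ = ∑ i, e i β := Finset.sum_congr rfl h1
      omega
    have htail' : IsGreedy S ΔP t (fun β => ∑ i, e' i β) := by
      have heq : (fun β => ∑ i, e' i β)
          = ((fun β => ∑ i, e i β) - degOf S ΔP α) := funext (fun β => hsum β)
      rw [heq]
      exact htail
    obtain ⟨hgr', hlen'⟩ := IH e' he' htail'
    have hfilt₀ : (α :: t).filter (fun γ => decide (cls S ΔP A i₀ γ))
        = α :: t.filter (fun γ => decide (cls S ΔP A i₀ γ)) :=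
      List.filter_cons_of_pos (decide_eq_true hcls₀)
    have hfiltne : ∀ i, i ≠ i₀ → (α :: t).filter (fun γ => decide (cls S ΔP A i γ))
        = t.filter (fun γ => decide (cls S ΔP A i γ)) := by
      intro i hi
      apply List.filter_cons_of_neg
      simp only [decide_eq_true_eq]
      intro hcl
      exact hi (cls_unique S hc hcl hcls₀)
    constructor
    · intro i
      by_cases h : i = i₀
      · rw [h, hfilt₀]
        refine ⟨hmax₀, ?_⟩
        rw [← he'₀]
        exact hgr' i₀
      · rw [hfiltne i h, ← he'ne i h]
        exact hgr' i
    · have hstep : ∀ i ∈ (Finset.univ : Finset (Fin k)),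
          ((α :: t).filter (fun γ => decide (cls S ΔP A i γ))).length
            = (t.filter (fun γ => decide (cls S ΔP A i γ))).length
              + (if i = i₀ then 1 else 0) := by
        intro i _
        by_cases h : i = i₀
        · rw [h, hfilt₀, if_pos rfl, List.length_cons]
        · rw [hfiltne i h, if_neg h, Nat.add_zero]
      rw [Finset.sum_congr rfl hstep, Finset.sum_add_distrib,
        Finset.sum_ite_eq' Finset.univ i₀ (fun _ => 1), if_pos (Finset.mem_univ _),
        List.length_cons, ← hlen']

lemma UQ {ΔP : Finset E} (hΔP : ΔP ⊆ S.simples) {k : ℕ}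
    {d : Fin k → (E → ℕ)} {A : Fin k → Finset E} (hc : Ctx S ΔP d A)
    (l : List E) (e : Fin k → (E → ℕ)) (he : ∀ i β, e i β ≤ d i β)
    (hl : IsGreedy S ΔP l (fun β => ∑ i, e i β))
    (L₂ : Fin k → List E)
    (hL₂ : ∀ i, IsGreedy S ΔP (L₂ i) (e i) ∧ (L₂ i).Sublist l)
    (hlen : l.length = ∑ i, (L₂ i).length) :
    ∀ i, L₂ i = l.filter (fun γ => decide (cls S ΔP A i γ)) := by
  obtain ⟨hgr, hlength⟩ := ST S hΔP hc l e he hl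
  have hsubf : ∀ i, (L₂ i).Sublist (l.filter (fun γ => decide (cls S ΔP A i γ))) := by
    intro i
    have hmem : ∀ γ ∈ L₂ i, (fun γ => decide (cls S ΔP A i γ)) γ = true := by
      intro γ hγ
      exact decide_eq_true (entries_cls S hΔP hc i (L₂ i) (e i) (he i) (hL₂ i).1 γ hγ)
    have hfs : (L₂ i).filter (fun γ => decide (cls S ΔP A i γ)) = L₂ i :=
      List.filter_eq_self.2 hmem
    have hsub2 : ((L₂ i).filter (fun γ => decide (cls S ΔP A i γ))).Sublist
        (l.filter (fun γ => decide (cls S ΔP A i γ))) :=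
      List.Sublist.filter _ (hL₂ i).2
    rw [hfs] at hsub2
    exact hsub2
  have hlele : ∀ i ∈ (Finset.univ : Finset (Fin k)),
      (L₂ i).length ≤ (l.filter (fun γ => decide (cls S ΔP A i γ))).length :=
    fun i _ => (hsubf i).length_le
  have hsumeq : ∑ i, (L₂ i).length
      = ∑ i, (l.filter (fun γ => decide (cls S ΔP A i γ))).length := by
    rw [← hlen, ← hlength]
  have := (Finset.sum_eq_sum_iff_of_le hlele).1 hsumeq
  intro i
  exact (hsubf i).eq_of_length (this i (Finset.mem_univ i))

end RS7


/-- Converse of the addition theorem for greedy decompositions: let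
`d₁, …, d_k` be degrees whose extended supports are pairwise totally disjoint, and let
`(α₁, …, α_r)` be a greedy decomposition of `d₁ + ⋯ + d_k`.  Then there exist unique
greedy decompositions `(α₁ⁱ, …, α_{rᵢ}ⁱ)` of `dᵢ` for each `i` such that
`r = r₁ + ⋯ + r_k` and each `(α₁ⁱ, …, α_{rᵢ}ⁱ)` is a subsequence of `(α₁, …, α_r)`. -/
theorem statement7 {E : Type} [NormedAddCommGroup E] [InnerProductSpace ℝ E]
    [FiniteDimensional ℝ E] (S : RootSystemData E) (ΔP : Finset E)
    (hΔP : ΔP ⊆ S.simples)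
    (k : ℕ) (d : Fin k → (E → ℕ)) (hdeg : ∀ i, IsDegree S ΔP (d i))
    (g : Fin k → List E) (hg : ∀ i, IsGreedy S ΔP (g i) (d i))
    (hdisj : ∀ i j, i ≠ j →
      TotallyDisjoint S (extSuppOf S (g i)) (extSuppOf S (g j)))
    (l : List E) (hl : IsGreedy S ΔP l (∑ i, d i)) :
    ∃! L : Fin k → List E,
      (∀ i, IsGreedy S ΔP (L i) (d i) ∧ (L i).Sublist l) ∧
        l.length = ∑ i, (L i).length := by
  classical
  have hc := RS7.ctx_of_data S hΔP d g hg hdisj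
  have hl' : IsGreedy S ΔP l (fun β => ∑ i, d i β) := by
    have heq : (∑ i, d i) = (fun β => ∑ i, d i β) := by
      funext β
      exact Finset.sum_apply β Finset.univ d
    rwa [heq] at hl
  have he : ∀ i (β : E), d i β ≤ d i β := fun i β => le_refl _
  obtain ⟨hgr, hlength⟩ := RS7.ST S hΔP hc l d he hl'
  refine ⟨fun i => l.filter
    (fun γ => decide (RS7.cls S ΔP (fun i => extSuppOf S (g i)) i γ)), ⟨?_, ?_⟩, ?_⟩
  · exact fun i => ⟨hgr i, List.filter_sublist⟩
  · exact hlength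
  · intro L₂ ⟨h1, h2⟩
    funext i
    exact RS7.UQ S hΔP hc l d he hl' L₂ h1 h2 i
end
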